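/- arXiv:1611.03944 — 7 statements merged into one kernel-verified Lean document; each statement's English description precedes it below -/
import Mathlib

section
/- Let (i_1,…,i_{k+1}) be any (k+1)-tuple of elements of J. Then for every z ∈ ℂ^n and every t ∈ ℂ^k such that f_{i_j}(t,z) ≠ 0 for all j = 1,…,k+1, one has f_{i_1,…,i_{k+1}}(z) · ∏_{j=1}^{k+1} ( a_{i_j} / f_{i_j}(t,z) ) = Σ_{j=1}^{k+1} (−1)^{j+1} a_{i_j} d_{i_1,…,î_j,…,i_{k+1}} · ∏_{m=1, m≠j}^{k+1} ( a_{i_m} / f_{i_m}(t,z) ). -/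
open scoped BigOperators

noncomputable section

namespace Stmt1

variable {n k : ℕ}

/-- `f_j(t,z) = g_j(t) + z_j` where `g_j(t) = ∑ i, b_j^i t_i`. -/
def fval (b : Fin n → Fin k → ℂ) (z : Fin n → ℂ) (t : Fin k → ℂ) (j : Fin n) : ℂ :=
  (∑ r : Fin k, b j r * t r) + z j

/-- `d_{i_1,…,i_k}`: determinant of the matrix whose `ℓ`-th column is `b (T ℓ)`. -/
def dtup (b : Fin n → Fin k → ℂ) (T : Fin k → Fin n) : ℂ :=
  Matrix.det (Matrix.of fun (r l : Fin k) => b (T l) r)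

/-- `f_{i_1,…,i_{k+1}}(z) = ∑_j (−1)^{j+1} z_{i_j} d_{i_1,…,î_j,…,i_{k+1}}`
(zero-based signs). -/
def fI (b : Fin n → Fin k → ℂ) (i : Fin (k + 1) → Fin n) (z : Fin n → ℂ) : ℂ :=
  ∑ j : Fin (k + 1), (-1 : ℂ) ^ (j : ℕ) * z (i j) * dtup b (fun l => i (j.succAbove l))

lemma row_exp (b : Fin n → Fin k → ℂ) (i : Fin (k + 1) → Fin n) (r : Fin k) :
    ∑ j : Fin (k + 1), (-1 : ℂ) ^ (j : ℕ) * b (i j) r *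
      dtup b (fun l => i (j.succAbove l)) = 0 := by
  set M : Matrix (Fin (k + 1)) (Fin (k + 1)) ℂ :=
    Matrix.of (fun p j => Fin.cases (b (i j) r) (fun s => b (i j) s) p) with hM
  have hdet : M.det = 0 := by
    apply Matrix.det_zero_of_row_eq (i := (0 : Fin (k + 1))) (j := r.succ)
    · exact (Fin.succ_ne_zero r).symm
    · funext j; simp [hM]
  have hexp := Matrix.det_succ_row_zero M
  rw [hdet] at hexp
  refine Eq.trans ?_ hexp.symm
  apply Finset.sum_congr rfl
  intro j _
  have h0 : M 0 j = b (i j) r := by simp [hM]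
  have hsub : M.submatrix Fin.succ j.succAbove
      = Matrix.of fun (r' l : Fin k) => b (i (j.succAbove l)) r' := by
    ext r' l; simp [hM, Matrix.submatrix]
  rw [h0, hsub]
  rfl

lemma fI_eq (b : Fin n → Fin k → ℂ) (i : Fin (k + 1) → Fin n) (z : Fin n → ℂ)
    (t : Fin k → ℂ) :
    fI b i z = ∑ j : Fin (k + 1),
      (-1 : ℂ) ^ (j : ℕ) * fval b z t (i j) * dtup b (fun l => i (j.succAbove l)) := by
  unfold fI fval
  have : ∀ j : Fin (k + 1),
      (-1 : ℂ) ^ (j : ℕ) * ((∑ r : Fin k, b (i j) r * t r) + z (i j)) *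
        dtup b (fun l => i (j.succAbove l))
      = (-1 : ℂ) ^ (j : ℕ) * z (i j) * dtup b (fun l => i (j.succAbove l))
        + ∑ r : Fin k, ((-1 : ℂ) ^ (j : ℕ) * b (i j) r *
            dtup b (fun l => i (j.succAbove l))) * t r := by
    intro j
    rw [mul_add, add_mul, add_comm]
    congr 1
    rw [Finset.mul_sum, Finset.sum_mul]
    exact Finset.sum_congr rfl fun r _ => by ring
  rw [Finset.sum_congr rfl (fun j _ => this j), Finset.sum_add_distrib, Finset.sum_comm]
  have h2 : ∀ r : Fin k,
      ∑ j : Fin (k + 1), ((-1 : ℂ) ^ (j : ℕ) * b (i j) r *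
        dtup b (fun l => i (j.succAbove l))) * t r = 0 := by
    intro r
    rw [← Finset.sum_mul, row_exp, zero_mul]
  rw [Finset.sum_congr rfl (fun r _ => h2 r), Finset.sum_const, smul_zero, add_zero]

/-- **Lemma 3.6 of the paper.** For any `(k+1)`-tuple `(i_1,…,i_{k+1})` of hyperplane
indices and any `(z,t)` where all `f_{i_j}` are nonzero,
`f_I(z) ∏_j a_{i_j}/f_{i_j} = ∑_j (−1)^{j+1} a_{i_j} d_{…î_j…} ∏_{m≠j} a_{i_m}/f_{i_m}`. -/
theorem stmt1 (n k : ℕ) (hk : 0 < k) (hkn : k < n)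
    (b : Fin n → Fin k → ℂ) (hb0 : ∀ j, b j ≠ 0)
    (hbspan : Submodule.span ℂ (Set.range b) = ⊤)
    (a : Fin n → ℂ) (ha : ∀ j, a j ≠ 0)
    (i : Fin (k + 1) → Fin n) (z : Fin n → ℂ) (t : Fin k → ℂ)
    (hf : ∀ j : Fin (k + 1), fval b z t (i j) ≠ 0) :
    fI b i z * ∏ j : Fin (k + 1), a (i j) / fval b z t (i j)
      = ∑ j : Fin (k + 1),
          (-1 : ℂ) ^ (j : ℕ) * a (i j) * dtup b (fun l => i (j.succAbove l)) *
            ∏ m ∈ Finset.univ.erase j, a (i m) / fval b z t (i m) := by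
  rw [fI_eq b i z t, Finset.sum_mul]
  apply Finset.sum_congr rfl
  intro j _
  have hp : ∏ m : Fin (k + 1), a (i m) / fval b z t (i m)
      = (a (i j) / fval b z t (i j)) *
        ∏ m ∈ Finset.univ.erase j, a (i m) / fval b z t (i m) :=
    (Finset.mul_prod_erase _ _ (Finset.mem_univ j)).symm
  rw [hp, show ((-1 : ℂ) ^ (j : ℕ) * fval b z t (i j) * dtup b (fun l => i (j.succAbove l))) *
      (a (i j) / fval b z t (i j) *
        ∏ m ∈ Finset.univ.erase j, a (i m) / fval b z t (i m))
    = (-1 : ℂ) ^ (j : ℕ) * a (i j) * dtup b (fun l => i (j.succAbove l)) *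
        (∏ m ∈ Finset.univ.erase j, a (i m) / fval b z t (i m)) *
        (fval b z t (i j) * (fval b z t (i j))⁻¹) from by rw [div_eq_mul_inv]; ring]
  rw [mul_inv_cancel₀ (hf j), mul_one]
end Stmt1
end
end

section
/- Suppose i_1,…,i_{k+1} ∈ J are pairwise distinct and the set {i_1,…,i_{k+1}} contains an independent k-element subset. Then in the algebra O(C) one has f_{i_1,…,i_{k+1}}(x) · p_{i_1} p_{i_2} ⋯ p_{i_{k+1}} = Σ_{j=1}^{k+1} (−1)^{j+1} a_{i_j} · w_{i_1,…,î_j,…,i_{k+1}}, where the hat denotes omission. -/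
open scoped BigOperators

noncomputable section

namespace Stmt2

variable {n k : ℕ}

/-- The polynomial `f_j(t,x) = ∑ i, b_j^i t_i + x_j` in `ℂ[t_1,…,t_k]`. -/
def fpoly (b : Fin n → Fin k → ℂ) (x : Fin n → ℂ) (j : Fin n) : MvPolynomial (Fin k) ℂ :=
  (∑ i : Fin k, MvPolynomial.C (b j i) * MvPolynomial.X i) + MvPolynomial.C (x j)

/-- The multiplicative set generated by the `f_j(t,x)`. -/
def fSub (b : Fin n → Fin k → ℂ) (x : Fin n → ℂ) : Submonoid (MvPolynomial (Fin k) ℂ) :=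
  Submonoid.closure (Set.range (fpoly b x))

/-- `O(U)`: the localization of `ℂ[t]` at the multiplicative set generated by the `f_j`. -/
abbrev OU (b : Fin n → Fin k → ℂ) (x : Fin n → ℂ) := Localization (fSub b x)

lemma fpoly_mem (b : Fin n → Fin k → ℂ) (x : Fin n → ℂ) (j : Fin n) :
    fpoly b x j ∈ fSub b x :=
  Submonoid.subset_closure ⟨j, rfl⟩

/-- The element `a_j/f_j ∈ O(U)`. -/
def pU (b : Fin n → Fin k → ℂ) (x : Fin n → ℂ) (a : Fin n → ℂ) (j : Fin n) : OU b x :=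
  Localization.mk (MvPolynomial.C (a j)) ⟨fpoly b x j, fpoly_mem b x j⟩

/-- The generator `∂Φ/∂t_i = ∑_j a_j b_j^i / f_j ∈ O(U)`. -/
def genI (b : Fin n → Fin k → ℂ) (x : Fin n → ℂ) (a : Fin n → ℂ) (i : Fin k) : OU b x :=
  ∑ j : Fin n,
    Localization.mk (MvPolynomial.C (a j * b j i)) ⟨fpoly b x j, fpoly_mem b x j⟩

/-- The ideal `I_x = ⟨∂Φ/∂t_1, …, ∂Φ/∂t_k⟩ ⊆ O(U)`. -/
def Icrit (b : Fin n → Fin k → ℂ) (x : Fin n → ℂ) (a : Fin n → ℂ) : Ideal (OU b x) :=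
  Ideal.span (Set.range (genI b x a))

/-- `O(C) = O(U)/I_x`, the algebra of functions on the critical set. -/
abbrev OC (b : Fin n → Fin k → ℂ) (x : Fin n → ℂ) (a : Fin n → ℂ) :=
  OU b x ⧸ Icrit b x a

/-- `p_j = [a_j/f_j] ∈ O(C)`. -/
def pC (b : Fin n → Fin k → ℂ) (x : Fin n → ℂ) (a : Fin n → ℂ) (j : Fin n) : OC b x a :=
  Ideal.Quotient.mk _ (pU b x a j)

/-- The image of a constant `d ∈ ℂ` in `O(C)`. -/
def cst (b : Fin n → Fin k → ℂ) (x : Fin n → ℂ) (a : Fin n → ℂ) (d : ℂ) : OC b x a :=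
  Ideal.Quotient.mk _ (algebraMap (MvPolynomial (Fin k) ℂ) (OU b x) (MvPolynomial.C d))

/-- `d_{i_1,…,i_k}`: determinant of the matrix whose `ℓ`-th column is `b (T ℓ)`. -/
def dtup (b : Fin n → Fin k → ℂ) (T : Fin k → Fin n) : ℂ :=
  Matrix.det (Matrix.of fun (r l : Fin k) => b (T l) r)

/-- `f_{i_1,…,i_{k+1}}(z) = ∑_j (−1)^{j+1} z_{i_j} d_{i_1,…,î_j,…,i_{k+1}}`
(zero-based signs). -/
def fI (b : Fin n → Fin k → ℂ) (i : Fin (k + 1) → Fin n) (z : Fin n → ℂ) : ℂ :=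
  ∑ j : Fin (k + 1), (-1 : ℂ) ^ (j : ℕ) * z (i j) * dtup b (fun l => i (j.succAbove l))

lemma det_key (b : Fin n → Fin k → ℂ) (i : Fin (k + 1) → Fin n) (r : Fin k) :
    ∑ j : Fin (k + 1),
      (-1 : ℂ) ^ (j : ℕ) * dtup b (fun l => i (j.succAbove l)) * b (i j) r = 0 := by
  classical
  set M : Matrix (Fin (k + 1)) (Fin (k + 1)) ℂ :=
    Matrix.of fun p q => b (i q) (Fin.cases r (fun l => l) p) with hM
  have hdet : M.det = 0 := by
    apply Matrix.det_zero_of_row_eq (i := 0) (j := r.succ) (Fin.succ_ne_zero r).symm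
    funext q
    simp [hM]
  rw [Matrix.det_succ_row_zero] at hdet
  rw [← hdet]
  refine Finset.sum_congr rfl fun j _ => ?_
  have h1 : M 0 j = b (i j) r := rfl
  have h2 : (M.submatrix Fin.succ j.succAbove).det = dtup b (fun l => i (j.succAbove l)) := by
    unfold dtup
    congr 1
  rw [h1, h2]
  ring

lemma poly_key (b : Fin n → Fin k → ℂ) (x : Fin n → ℂ) (i : Fin (k + 1) → Fin n) :
    ∑ j : Fin (k + 1),
        MvPolynomial.C ((-1 : ℂ) ^ (j : ℕ) * dtup b (fun l => i (j.succAbove l))) *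
          fpoly b x (i j)
      = MvPolynomial.C (fI b i x) := by
  classical
  set c : Fin (k + 1) → ℂ := fun j => (-1 : ℂ) ^ (j : ℕ) * dtup b (fun l => i (j.succAbove l))
    with hc
  calc ∑ j, MvPolynomial.C (c j) * fpoly b x (i j)
      = ∑ j, ((∑ r : Fin k, MvPolynomial.C (c j * b (i j) r) * MvPolynomial.X r)
          + MvPolynomial.C (c j * x (i j))) := by
        refine Finset.sum_congr rfl fun j _ => ?_
        simp only [fpoly, map_mul, mul_add, Finset.mul_sum, mul_assoc]
    _ = (∑ r : Fin k, ∑ j, MvPolynomial.C (c j * b (i j) r) * MvPolynomial.X r)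
          + ∑ j, MvPolynomial.C (c j * x (i j)) := by
        rw [Finset.sum_add_distrib, Finset.sum_comm]
    _ = MvPolynomial.C (fI b i x) := by
        have h1 : ∀ r : Fin k,
            (∑ j, MvPolynomial.C (c j * b (i j) r) * MvPolynomial.X r) = 0 := by
          intro r
          rw [← Finset.sum_mul, ← map_sum]
          have : ∑ j, c j * b (i j) r = 0 := by
            rw [← det_key b i r]
          rw [this]; simp
        simp only [h1, Finset.sum_const_zero, zero_add, ← map_sum]
        congr 1
        unfold fI
        exact Finset.sum_congr rfl fun j _ => by rw [hc]; ring

lemma pU_mul (b : Fin n → Fin k → ℂ) (x : Fin n → ℂ) (a : Fin n → ℂ) (j : Fin n) :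
    pU b x a j * algebraMap (MvPolynomial (Fin k) ℂ) (OU b x) (fpoly b x j)
      = algebraMap (MvPolynomial (Fin k) ℂ) (OU b x) (MvPolynomial.C (a j)) := by
  rw [pU, ← Localization.mk_one_eq_algebraMap, ← Localization.mk_one_eq_algebraMap,
    Localization.mk_mul, mul_one, Localization.mk_eq_mk_iff, Localization.r_iff_exists]
  exact ⟨1, by simp [mul_comm]⟩

set_option maxHeartbeats 1000000 in
set_option synthInstance.maxHeartbeats 400000 in
/-- **Corollary 3.7 of the paper.** If `i_1,…,i_{k+1} ∈ J` are pairwise distinct and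
contain an independent `k`-element subset, then in `O(C)`
`f_{i_1,…,i_{k+1}}(x) p_{i_1} ⋯ p_{i_{k+1}} = ∑_j (−1)^{j+1} a_{i_j} w_{i_1,…,î_j,…,i_{k+1}}`,
where `w_{l_1,…,l_k} = d_{l_1,…,l_k} p_{l_1} ⋯ p_{l_k}`. -/
theorem stmt2 (n k : ℕ) (hk : 0 < k) (hkn : k < n)
    (b : Fin n → Fin k → ℂ) (hb0 : ∀ j, b j ≠ 0)
    (hbspan : Submodule.span ℂ (Set.range b) = ⊤)
    (a : Fin n → ℂ) (ha : ∀ j, a j ≠ 0)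
    (x : Fin n → ℂ)
    (i : Fin (k + 1) → Fin n) (hinj : Function.Injective i)
    (hind : ∃ j : Fin (k + 1),
      LinearIndependent ℂ (fun l : Fin k => b (i (j.succAbove l)))) :
    cst b x a (fI b i x) * ∏ j : Fin (k + 1), pC b x a (i j)
      = ∑ j : Fin (k + 1),
          cst b x a ((-1 : ℂ) ^ (j : ℕ) * a (i j) * dtup b (fun l => i (j.succAbove l))) *
            ∏ m ∈ Finset.univ.erase j, pC b x a (i m) := by
  classical
  have key : (algebraMap (MvPolynomial (Fin k) ℂ) (OU b x)) (MvPolynomial.C (fI b i x)) *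
        ∏ j : Fin (k + 1), pU b x a (i j)
      = ∑ j : Fin (k + 1),
          (algebraMap (MvPolynomial (Fin k) ℂ) (OU b x))
              (MvPolynomial.C ((-1 : ℂ) ^ (j : ℕ) * a (i j) *
                dtup b (fun l => i (j.succAbove l)))) *
            ∏ m ∈ Finset.univ.erase j, pU b x a (i m) := by
    have step : ∀ j : Fin (k + 1),
        (algebraMap (MvPolynomial (Fin k) ℂ) (OU b x))
            (MvPolynomial.C ((-1 : ℂ) ^ (j : ℕ) * a (i j) *
              dtup b (fun l => i (j.succAbove l)))) *
          ∏ m ∈ Finset.univ.erase j, pU b x a (i m)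
        = (algebraMap (MvPolynomial (Fin k) ℂ) (OU b x))
            (MvPolynomial.C ((-1 : ℂ) ^ (j : ℕ) * dtup b (fun l => i (j.succAbove l))) *
              fpoly b x (i j)) *
          ∏ m : Fin (k + 1), pU b x a (i m) := by
      intro j
      have hC : (MvPolynomial.C ((-1 : ℂ) ^ (j : ℕ) * a (i j) *
            dtup b (fun l => i (j.succAbove l))) : MvPolynomial (Fin k) ℂ)
          = MvPolynomial.C ((-1 : ℂ) ^ (j : ℕ) * dtup b (fun l => i (j.succAbove l))) *
            MvPolynomial.C (a (i j)) := by
        rw [← map_mul]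
        congr 1
        ring
      rw [hC, map_mul, map_mul,
        ← Finset.mul_prod_erase Finset.univ (fun m => pU b x a (i m)) (Finset.mem_univ j),
        ← pU_mul b x a (i j)]
      simp only [map_mul]
      ring
    rw [Finset.sum_congr rfl fun j _ => step j, ← Finset.sum_mul, ← map_sum,
      poly_key b x i]
  calc cst b x a (fI b i x) * ∏ j : Fin (k + 1), pC b x a (i j)
      = Ideal.Quotient.mk (Icrit b x a)
          ((algebraMap (MvPolynomial (Fin k) ℂ) (OU b x)) (MvPolynomial.C (fI b i x)) *
            ∏ j : Fin (k + 1), pU b x a (i j)) := by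
        rw [map_mul, map_prod]; rfl
    _ = Ideal.Quotient.mk (Icrit b x a)
          (∑ j : Fin (k + 1),
            (algebraMap (MvPolynomial (Fin k) ℂ) (OU b x))
                (MvPolynomial.C ((-1 : ℂ) ^ (j : ℕ) * a (i j) *
                  dtup b (fun l => i (j.succAbove l)))) *
              ∏ m ∈ Finset.univ.erase j, pU b x a (i m)) := by rw [key]
    _ = ∑ j : Fin (k + 1),
          cst b x a ((-1 : ℂ) ^ (j : ℕ) * a (i j) * dtup b (fun l => i (j.succAbove l))) *
            ∏ m ∈ Finset.univ.erase j, pC b x a (i m) := by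
        rw [map_sum]
        exact Finset.sum_congr rfl fun j _ => by rw [map_mul, map_prod]; rfl


end Stmt2
end
end

section
/- For every (k−1)-tuple (i_1,…,i_{k−1}) of elements of J one has Σ_{j∈J} d_{j,i_1,…,i_{k−1}} · p_j = 0 in the algebra O(C). -/
open scoped BigOperators

noncomputable section

namespace Stmt3

variable {n k : ℕ}

/-- The polynomial `f_j(t,x) = ∑ i, b_j^i t_i + x_j` in `ℂ[t_1,…,t_k]`. -/
def fpoly (b : Fin n → Fin k → ℂ) (x : Fin n → ℂ) (j : Fin n) : MvPolynomial (Fin k) ℂ :=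
  (∑ i : Fin k, MvPolynomial.C (b j i) * MvPolynomial.X i) + MvPolynomial.C (x j)

/-- The multiplicative set generated by the `f_j(t,x)`. -/
def fSub (b : Fin n → Fin k → ℂ) (x : Fin n → ℂ) : Submonoid (MvPolynomial (Fin k) ℂ) :=
  Submonoid.closure (Set.range (fpoly b x))

/-- `O(U)`: the localization of `ℂ[t]` at the multiplicative set generated by the `f_j`. -/
abbrev OU (b : Fin n → Fin k → ℂ) (x : Fin n → ℂ) := Localization (fSub b x)

lemma fpoly_mem (b : Fin n → Fin k → ℂ) (x : Fin n → ℂ) (j : Fin n) :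
    fpoly b x j ∈ fSub b x :=
  Submonoid.subset_closure ⟨j, rfl⟩

/-- The element `a_j/f_j ∈ O(U)`. -/
def pU (b : Fin n → Fin k → ℂ) (x : Fin n → ℂ) (a : Fin n → ℂ) (j : Fin n) : OU b x :=
  Localization.mk (MvPolynomial.C (a j)) ⟨fpoly b x j, fpoly_mem b x j⟩

/-- The generator `∂Φ/∂t_i = ∑_j a_j b_j^i / f_j ∈ O(U)`. -/
def genI (b : Fin n → Fin k → ℂ) (x : Fin n → ℂ) (a : Fin n → ℂ) (i : Fin k) : OU b x :=
  ∑ j : Fin n,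
    Localization.mk (MvPolynomial.C (a j * b j i)) ⟨fpoly b x j, fpoly_mem b x j⟩

/-- The ideal `I_x = ⟨∂Φ/∂t_1, …, ∂Φ/∂t_k⟩ ⊆ O(U)`. -/
def Icrit (b : Fin n → Fin k → ℂ) (x : Fin n → ℂ) (a : Fin n → ℂ) : Ideal (OU b x) :=
  Ideal.span (Set.range (genI b x a))

/-- `O(C) = O(U)/I_x`, the algebra of functions on the critical set. -/
abbrev OC (b : Fin n → Fin k → ℂ) (x : Fin n → ℂ) (a : Fin n → ℂ) :=
  OU b x ⧸ Icrit b x a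

/-- `p_j = [a_j/f_j] ∈ O(C)`. -/
def pC (b : Fin n → Fin k → ℂ) (x : Fin n → ℂ) (a : Fin n → ℂ) (j : Fin n) : OC b x a :=
  Ideal.Quotient.mk _ (pU b x a j)

/-- The image of a constant `d ∈ ℂ` in `O(C)`. -/
def cst (b : Fin n → Fin k → ℂ) (x : Fin n → ℂ) (a : Fin n → ℂ) (d : ℂ) : OC b x a :=
  Ideal.Quotient.mk _ (algebraMap (MvPolynomial (Fin k) ℂ) (OU b x) (MvPolynomial.C d))

/-- `d_{i_1,…,i_k}`: determinant of the matrix whose `ℓ`-th column is `b (T ℓ)`. -/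
def dtup (b : Fin n → Fin k → ℂ) (T : Fin k → Fin n) : ℂ :=
  Matrix.det (Matrix.of fun (r l : Fin k) => b (T l) r)

/-- The `k`-tuple `(j, i_1, …, i_{k−1})`. -/
def consT (hk : 0 < k) (j : Fin n) (iT : Fin (k - 1) → Fin n) : Fin k → Fin n :=
  fun l => if hl : (l : ℕ) = 0 then j
    else iT ⟨(l : ℕ) - 1, by have := l.isLt; omega⟩

/-- **Relation (3.5) of the paper.** For every `(k−1)`-tuple `(i_1,…,i_{k−1})` of
elements of `J`, `∑_{j∈J} d_{j,i_1,…,i_{k−1}} p_j = 0` in `O(C)`. -/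
theorem stmt3 (n k : ℕ) (hk : 0 < k) (hkn : k < n)
    (b : Fin n → Fin k → ℂ) (hb0 : ∀ j, b j ≠ 0)
    (hbspan : Submodule.span ℂ (Set.range b) = ⊤)
    (a : Fin n → ℂ) (ha : ∀ j, a j ≠ 0)
    (x : Fin n → ℂ)
    (iT : Fin (k - 1) → Fin n) :
    ∑ j : Fin n, cst b x a (dtup b (consT hk j iT)) * pC b x a j = 0 := by
  classical
  set z : Fin k := ⟨0, hk⟩ with hz
  set A : Matrix (Fin k) (Fin k) ℂ :=
    Matrix.of (fun l r => if hl : (l : ℕ) = 0 then 0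
      else b (iT ⟨(l : ℕ) - 1, by have := l.isLt; omega⟩) r) with hA
  set c : Fin k → ℂ := fun r => (A.updateRow z (Pi.single r 1)).det with hc
  -- expansion of the determinant along the first column
  have hsum : ∀ v : Fin k → ℂ,
      (A.updateRow z v).det = ∑ r, v r * c r := by
    intro v
    have hv : v = ∑ r, v r • (Pi.single r 1 : Fin k → ℂ) := by
      ext r
      simp [Pi.single_apply, Finset.sum_ite_eq', mul_comm]
    conv_lhs => rw [hv]
    have : ∀ (t : Finset (Fin k)),
        (A.updateRow z (∑ r ∈ t, v r • (Pi.single r 1 : Fin k → ℂ))).det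
          = ∑ r ∈ t, v r * c r := by
      intro t
      induction t using Finset.induction with
      | empty =>
          simp only [Finset.sum_empty]
          exact Matrix.det_eq_zero_of_row_eq_zero z (by simp)
      | insert _ _ h ih =>
          rw [Finset.sum_insert h, Matrix.det_updateRow_add,
            Matrix.det_updateRow_smul, ih, Finset.sum_insert h, hc]
    exact this Finset.univ
  have hd : ∀ j, dtup b (consT hk j iT) = ∑ r, b j r * c r := by
    intro j
    have h1 : (Matrix.of fun (r l : Fin k) => b (consT hk j iT l) r)
        = (A.updateRow z (b j)).transpose := by
      ext r l
      by_cases hl : l = z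
      · subst hl
        simp [consT, hz, Matrix.updateRow_apply]
      · have hl' : (l : ℕ) ≠ 0 := fun h => hl (Fin.ext h)
        simp [consT, hl', hl, Matrix.updateRow_apply, hA]
    rw [dtup, h1, Matrix.det_transpose, hsum]
  -- the key identity in O(U)
  have key : (∑ j : Fin n,
        algebraMap (MvPolynomial (Fin k) ℂ) (OU b x)
          (MvPolynomial.C (dtup b (consT hk j iT))) * pU b x a j)
      = ∑ r : Fin k,
          algebraMap (MvPolynomial (Fin k) ℂ) (OU b x) (MvPolynomial.C (c r))
            * genI b x a r := by
    have step : ∀ j : Fin n,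
        algebraMap (MvPolynomial (Fin k) ℂ) (OU b x)
            (MvPolynomial.C (dtup b (consT hk j iT))) * pU b x a j
          = ∑ r : Fin k,
              Localization.mk (MvPolynomial.C (c r * (a j * b j r)))
                ⟨fpoly b x j, fpoly_mem b x j⟩ := by
      intro j
      rw [pU, ← Localization.mk_one_eq_algebraMap, Localization.mk_mul,
        one_mul, ← Localization.mk_sum]
      congr 1
      rw [← map_mul, ← map_sum]
      congr 1
      rw [hd j, Finset.sum_mul]
      exact Finset.sum_congr rfl fun r _ => by ring
    rw [Finset.sum_congr rfl fun j _ => step j, Finset.sum_comm]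
    refine Finset.sum_congr rfl fun r _ => ?_
    rw [genI, Finset.mul_sum]
    refine Finset.sum_congr rfl fun j _ => ?_
    rw [← Localization.mk_one_eq_algebraMap, Localization.mk_mul, one_mul,
      ← map_mul]
  have hmem : (∑ r : Fin k,
      algebraMap (MvPolynomial (Fin k) ℂ) (OU b x) (MvPolynomial.C (c r))
        * genI b x a r) ∈ Icrit b x a :=
    Ideal.sum_mem _ fun r _ =>
      Ideal.mul_mem_left _ _ (Ideal.subset_span ⟨r, rfl⟩)
  calc ∑ j : Fin n, cst b x a (dtup b (consT hk j iT)) * pC b x a j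
      = Ideal.Quotient.mk (Icrit b x a)
          (∑ j : Fin n,
            algebraMap (MvPolynomial (Fin k) ℂ) (OU b x)
              (MvPolynomial.C (dtup b (consT hk j iT))) * pU b x a j) := by
        set_option synthInstance.maxHeartbeats 1000000 in
        rw [map_sum]
        rfl
    _ = 0 := by
        rw [key, Ideal.Quotient.eq_zero_iff_mem]
        exact hmem

end Stmt3
end
end

section
/- Let (J_1,…,J_m) be an elementary subarrangement of type λ with J_λ = J_1 ∪ ⋯ ∪ J_m, and let I and L be distinguished elements of (J_1,…,J_m). For each h let u_h (respectively s_h) be the position, in the increasing ordering of J_h, of the unique element of J_h ∖ I (respectively of J_h ∖ L). Let T_I (respectively T_L) be the ordered k-tuple obtained by concatenating the increasing lists of I ∩ J_1, …, I ∩ J_m (respectively of L ∩ J_1, …, L ∩ J_m). Then S_a( s_{T_I}(J_1,…,J_m), e_{T_L} ) = ( ∏_{h=1}^m (−1)^{u_h + s_h} ) · ∏_{j∈J_λ} a_j. -/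
open scoped BigOperators
open Classical

noncomputable section

namespace ArrPaper

variable {n k : ℕ}

/-! ## The model of `V = ⋀^k ℂ^J` -/

/-- The `k`-element subsets of `J = {1,…,n}`. -/
abbrev KSub (n k : ℕ) := {s : Finset (Fin n) // s.card = k}

/-- The model of `V = ⋀^k(ℂ^J)`: coordinates with respect to the standard basis
`(e_I)`, `I` a `k`-element subset of `J`. -/
abbrev V (n k : ℕ) := KSub n k → ℂ

/-- The wedge product of `k` vectors of `ℂ^n` as an element of `V`:
its coordinate at a `k`-subset `I` is the determinant of the values of the vectors at the
elements of `I` listed in increasing order. -/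
def wedgek (v : Fin k → Fin n → ℂ) : V n k :=
  fun I => Matrix.det (Matrix.of fun (l l' : Fin k) => v l (I.1.orderIsoOfFin I.2 l').1)

/-- `e_T = e_{i_1} ∧ ⋯ ∧ e_{i_k}` for an ordered `k`-tuple `T = (i_1,…,i_k)`. -/
def eT (T : Fin k → Fin n) : V n k :=
  wedgek (fun l => Pi.single (T l) (1 : ℂ))

/-- A subset `S ⊆ J` is independent if the vectors `(b_j)_{j∈S}` are linearly
independent. -/
def Indep (b : Fin n → Fin k → ℂ) (S : Finset (Fin n)) : Prop :=
  LinearIndependent ℂ (fun j : S => b j)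

/-- A circuit: a dependent set all of whose proper subsets are independent. -/
def Circuit (b : Fin n → Fin k → ℂ) (S : Finset (Fin n)) : Prop :=
  ¬ Indep b S ∧ ∀ S' ⊂ S, Indep b S'

/-- The projection `ρ : V → V`, `ρ(e_I) = e_I` for `I` independent, `ρ(e_I) = 0` for
`I` dependent. -/
def rho (b : Fin n → Fin k → ℂ) (u : V n k) : V n k :=
  fun I => if Indep b I.1 then u I else 0

/-- The contravariant form
`S_a(u,v) = ∑_{I independent} (∏_{i∈I} a_i) u_I v_I`. -/
def Sform (b : Fin n → Fin k → ℂ) (a : Fin n → ℂ) (u v : V n k) : ℂ :=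
  ∑ I : KSub n k, if Indep b I.1 then (∏ i ∈ I.1, a i) * u I * v I else 0

/-- The `k`-tuple `(j, i_1, …, i_{k−1})` where `(i_1,…,i_{k−1})` lists `I'`
in increasing order. -/
def consTuple (hk : 0 < k) (j : Fin n) (I' : Finset (Fin n)) (hI' : I'.card = k - 1) :
    Fin k → Fin n :=
  fun l => if hl : (l : ℕ) = 0 then j
    else (I'.orderIsoOfFin hI' ⟨(l : ℕ) - 1, by have := l.isLt; omega⟩).1

/-- `D_{I'} = ρ(∑_{j∈J} e_j ∧ e_{i_1} ∧ ⋯ ∧ e_{i_{k−1}})` for a `(k−1)`-subset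
`I' = {i_1 < … < i_{k−1}}`. -/
def Delem (b : Fin n → Fin k → ℂ) (hk : 0 < k)
    (I' : Finset (Fin n)) (hI' : I'.card = k - 1) : V n k :=
  rho b (∑ j : Fin n, eT (consTuple hk j I' hI'))

/-- The space of singular vectors:
`Sing_a = {v ∈ range ρ | S_a(D_{I'}, v) = 0 for all independent (k−1)-subsets I'}`. -/
def SingA (b : Fin n → Fin k → ℂ) (a : Fin n → ℂ) (hk : 0 < k) : Set (V n k) :=
  {v | (∃ u, rho b u = v) ∧
    ∀ (I' : Finset (Fin n)) (hI' : I'.card = k - 1), Indep b I' →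
      Sform b a (Delem b hk I' hI') v = 0}

/-- The span of the elements `D_{I'}`, `I'` independent `(k−1)`-subsets. -/
def Dspan (b : Fin n → Fin k → ℂ) (hk : 0 < k) : Submodule ℂ (V n k) :=
  Submodule.span ℂ {w | ∃ (I' : Finset (Fin n)) (hI' : I'.card = k - 1),
    Indep b I' ∧ w = Delem b hk I' hI'}

/-- Hypothesis (H1): the restriction of `S_a` to `span{D_{I'}}` is nondegenerate. -/
def H1 (b : Fin n → Fin k → ℂ) (a : Fin n → ℂ) (hk : 0 < k) : Prop :=
  ∀ w ∈ Dspan b hk, (∀ w' ∈ Dspan b hk, Sform b a w w' = 0) → w = 0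

/-- `π` is the `S_a`-orthogonal projection of `range ρ` onto `Sing_a` (along
`span{D_{I'}}`), extended to `V` by `π(v) = π(ρ(v))`. -/
def IsProj (b : Fin n → Fin k → ℂ) (a : Fin n → ℂ) (hk : 0 < k)
    (π : V n k →ₗ[ℂ] V n k) : Prop :=
  ∀ v, π v ∈ SingA b a hk ∧ rho b v - π v ∈ Dspan b hk

/-! ## Elementary subarrangements -/

/-- An elementary subarrangement of type `λ = (λ_1,…,λ_m)` of the arrangement with
normals `b`: pairwise disjoint subsets `J_1,…,J_m ⊆ J` with `|J_h| = λ_h + 1`,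
`dim span{b_j : j ∈ J_1 ∪ ⋯ ∪ J_h} = λ_1 + ⋯ + λ_h`, and the same after deleting any
single `j ∈ J_h` from `J_1 ∪ ⋯ ∪ J_h`. -/
structure Elementary (n k : ℕ) (b : Fin n → Fin k → ℂ) where
  m : ℕ
  lam : Fin m → ℕ
  Jset : Fin m → Finset (Fin n)
  lam_pos : ∀ h, 0 < lam h
  lam_sum : ∑ h, lam h = k
  disj : ∀ h h', h ≠ h' → Disjoint (Jset h) (Jset h')
  card_eq : ∀ h, (Jset h).card = lam h + 1
  rank_eq : ∀ h, Module.finrank ℂ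
      (Submodule.span ℂ (b '' {j | ∃ h' ≤ h, j ∈ Jset h'}))
      = ∑ h' ∈ Finset.univ.filter (fun h' => h' ≤ h), lam h'
  rank_erase : ∀ h, ∀ j ∈ Jset h, Module.finrank ℂ
      (Submodule.span ℂ (b '' ({j' | ∃ h' ≤ h, j' ∈ Jset h'} \ {j})))
      = ∑ h' ∈ Finset.univ.filter (fun h' => h' ≤ h), lam h'

variable {b : Fin n → Fin k → ℂ}

/-- The `i`-th element (in increasing order) of `J_h`. -/
def Elementary.elt (A : Elementary n k b) (h : Fin A.m) (i : Fin (A.lam h + 1)) :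
    Fin n :=
  ((A.Jset h).orderIsoOfFin (A.card_eq h) i).1

lemma Elementary.elt_mem (A : Elementary n k b) (h : Fin A.m) (i : Fin (A.lam h + 1)) :
    A.elt h i ∈ A.Jset h :=
  ((A.Jset h).orderIsoOfFin (A.card_eq h) i).2

lemma Elementary.card_erase (A : Elementary n k b) (h : Fin A.m)
    (i : Fin (A.lam h + 1)) :
    ((A.Jset h).erase (A.elt h i)).card = A.lam h := by
  rw [Finset.card_erase_of_mem (A.elt_mem h i), A.card_eq]
  omega

/-- The `λ_h`-tuple listing `J_h ∖ {j_i^h}` in increasing order. -/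
def Elementary.omit (A : Elementary n k b) (h : Fin A.m) (i : Fin (A.lam h + 1))
    (l : Fin (A.lam h)) : Fin n :=
  (((A.Jset h).erase (A.elt h i)).orderIsoOfFin (A.card_erase h i) l).1

lemma concatLen {α : Type*} {m k : ℕ} (lam : Fin m → ℕ) (hsum : ∑ h, lam h = k)
    (f : (h : Fin m) → Fin (lam h) → α) :
    ((List.finRange m).flatMap fun h => List.ofFn (f h)).length = k := by
  rw [List.length_flatMap]
  simp only [List.map_map, Function.comp_def, List.length_ofFn]
  rw [← Fin.sum_univ_def]
  exact hsum

/-- The concatenation of the tuples `f h : Fin (lam h) → α`, `h = 0, …, m−1`, in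
order, as a single `k`-tuple. -/
def concatTuple {α : Type*} {m k : ℕ} (lam : Fin m → ℕ) (hsum : ∑ h, lam h = k)
    (f : (h : Fin m) → Fin (lam h) → α) : Fin k → α :=
  fun l => ((List.finRange m).flatMap fun h => List.ofFn (f h)).get
    (Fin.cast (concatLen lam hsum f).symm l)

/-- `λ^{h−1} + i` as an element of `Fin k`: the position of the `i`-th slot of the
`h`-th block in the concatenation. -/
def blockIdx {m k : ℕ} (lam : Fin m → ℕ) (hsum : ∑ h, lam h = k)
    (h : Fin m) (i : Fin (lam h)) : Fin k :=
  ⟨(∑ h' ∈ Finset.univ.filter (fun h' => h' < h), lam h') + (i : ℕ), by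
    have h1 : (∑ h' ∈ Finset.univ.filter (fun h' => h' < h), lam h') + lam h
        ≤ ∑ h', lam h' := by
      have hins : h ∉ Finset.univ.filter (fun h' => h' < h) := by simp
      calc (∑ h' ∈ Finset.univ.filter (fun h' => h' < h), lam h') + lam h
          = ∑ h' ∈ insert h (Finset.univ.filter (fun h' => h' < h)), lam h' := by
            rw [Finset.sum_insert hins]; ring
        _ ≤ ∑ h', lam h' := Finset.sum_le_sum_of_subset (Finset.subset_univ _)
    have h2 := i.isLt
    omega⟩

/-- The singular element `s(J_1,…,J_m) = σ_1 ∧ ⋯ ∧ σ_m`, expanded by multilinearity: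
`σ_h = ∑_i (−1)^{i+1} a_{j_i^h} (wedge of J_h ∖ {j_i^h} in increasing order)`
(zero-based signs). -/
def Elementary.sElem (A : Elementary n k b) (a : Fin n → ℂ) : V n k :=
  ∑ t : (h : Fin A.m) → Fin (A.lam h + 1),
    (∏ h, (-1 : ℂ) ^ (t h : ℕ) * a (A.elt h (t h))) •
      eT (concatTuple A.lam A.lam_sum (fun h => A.omit h (t h)))

/-- `J_λ = J_1 ∪ ⋯ ∪ J_m`. -/
def Elementary.JLam (A : Elementary n k b) : Finset (Fin n) :=
  Finset.univ.biUnion A.Jset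

/-- A `k`-subset `I ⊆ J` is a distinguished element of `(J_1,…,J_m)` if `I ⊆ J_λ`
and `|I ∩ J_h| = λ_h` for all `h`. -/
def Elementary.Distinguished (A : Elementary n k b) (I : Finset (Fin n)) : Prop :=
  I.card = k ∧ I ⊆ A.JLam ∧ ∀ h, (I ∩ A.Jset h).card = A.lam h

/-- `X_h^* = span{b_j : j ∈ J_1 ∪ ⋯ ∪ J_h}`. -/
def Elementary.Xstar (A : Elementary n k b) (h : Fin A.m) :
    Submodule ℂ (Fin k → ℂ) :=
  Submodule.span ℂ (b '' {j | ∃ h' ≤ h, j ∈ A.Jset h'})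

/-- `a(J_λ, J, h) = ∑_{j ∈ J, b_j ∉ X_h^*} a_j`. -/
def Elementary.awt (A : Elementary n k b) (a : Fin n → ℂ) (h : Fin A.m) : ℂ :=
  ∑ j : Fin n, if b j ∈ A.Xstar h then 0 else a j

/-- `a_J = ∑_{j∈J} a_j`. -/
def aJ (n : ℕ) (a : Fin n → ℂ) : ℂ := ∑ j : Fin n, a j

/-- `a(J_λ, J) = a_J ∏_{h=1}^{m−1} a(J_λ, J, h)`. -/
def Elementary.aW (A : Elementary n k b) (a : Fin n → ℂ) : ℂ :=
  aJ n a * ∏ h ∈ Finset.univ.filter (fun h : Fin A.m => (h : ℕ) + 1 < A.m), A.awt a h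

/-- Hypothesis (H2): `a(J_λ, J) ≠ 0` for every elementary subarrangement. -/
def H2 (b : Fin n → Fin k → ℂ) (a : Fin n → ℂ) : Prop :=
  ∀ A : Elementary n k b, A.aW a ≠ 0

/-- The coefficient of `e_T` in `w`, for an ordered tuple `T` with underlying set
`I` (of cardinality `k`): since `e_T = ±e_I`, it equals `e_T(I) ⋅ w(I)`. -/
def coeffAt (T : Fin k → Fin n) (I : KSub n k) (w : V n k) : ℂ :=
  eT T I * w I

end ArrPaper

open ArrPaper

namespace ArrPaper

/-- For a distinguished element `I` of `(J_1,…,J_m)`, the ordered `k`-tuple obtained by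
concatenating the increasing lists of `I ∩ J_1, …, I ∩ J_m`. -/
def Elementary.concatI {n k : ℕ} {b : Fin n → Fin k → ℂ} (A : Elementary n k b)
    (I : Finset (Fin n)) (hcard : ∀ h, (I ∩ A.Jset h).card = A.lam h) :
    Fin k → Fin n :=
  concatTuple A.lam A.lam_sum
    (fun h l => ((I ∩ A.Jset h).orderIsoOfFin (hcard h) l).1)

end ArrPaper

namespace ArrPaper

lemma orderIsoOfFin_val_congr {α : Type*} [LinearOrder α] {s t : Finset α} (hst : s = t)
    {c : ℕ} (hsc : s.card = c) (htc : t.card = c) (i : Fin c) :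
    (s.orderIsoOfFin hsc i).1 = (t.orderIsoOfFin htc i).1 := by
  subst hst; rfl

lemma exists_concatTuple_eq {α : Type*} {m k : ℕ} (lam : Fin m → ℕ)
    (hsum : ∑ h, lam h = k) (f : (h : Fin m) → Fin (lam h) → α) (x : α) :
    (∃ l, concatTuple lam hsum f l = x) ↔ ∃ h i, f h i = x := by
  have hx : ∀ y : α,
      (y ∈ (List.finRange m).flatMap fun h => List.ofFn (f h)) ↔ ∃ h i, f h i = y := by
    intro y
    simp [List.mem_flatMap, List.mem_ofFn, Set.mem_range]
  constructor
  · rintro ⟨l, rfl⟩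
    exact (hx _).1 (List.mem_iff_get.mpr ⟨_, rfl⟩)
  · rintro ⟨h, i, rfl⟩
    obtain ⟨l, hl⟩ := List.mem_iff_get.mp ((hx _).2 ⟨h, i, rfl⟩)
    exact ⟨Fin.cast (concatLen lam hsum f) l, hl⟩

lemma eT_eq_zero {n k : ℕ} (T : Fin k → Fin n) (I : KSub n k)
    (h : Finset.image T Finset.univ ≠ I.1) : eT T I = 0 := by
  unfold eT wedgek
  by_cases hinj : Function.Injective T
  · have hex : ∃ l, T l ∉ I.1 := by
      by_contra hc
      push_neg at hc
      refine h (Finset.eq_of_subset_of_card_le ?_ ?_)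
      · intro x hx
        obtain ⟨l, -, rfl⟩ := Finset.mem_image.mp hx
        exact hc l
      · rw [Finset.card_image_of_injective _ hinj, Finset.card_univ, Fintype.card_fin, I.2]
    obtain ⟨l, hl⟩ := hex
    refine Matrix.det_eq_zero_of_row_eq_zero l fun l' => ?_
    have hmem := (I.1.orderIsoOfFin I.2 l').2
    show (Pi.single (T l) (1 : ℂ) : Fin n → ℂ) ((I.1.orderIsoOfFin I.2 l').1) = 0
    exact Pi.single_eq_of_ne (M := fun _ : Fin n => ℂ)
      (fun (he : ((I.1.orderIsoOfFin I.2) l').1 = T l) => hl (by rw [← he]; exact hmem)) (1 : ℂ)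
  · rw [Function.not_injective_iff] at hinj
    obtain ⟨l1, l2, heq, hne⟩ := hinj
    refine Matrix.det_zero_of_row_eq hne ?_
    funext l'
    exact congrFun (congrArg (fun j : Fin n => (Pi.single j (1 : ℂ) : Fin n → ℂ)) heq)
      ((I.1.orderIsoOfFin I.2 l').1)

lemma eT_mul_self {n k : ℕ} (T : Fin k → Fin n) (I : KSub n k)
    (hinj : Function.Injective T) (hmem : ∀ l, T l ∈ I.1) :
    eT T I * eT T I = 1 := by
  have hπinj : Function.Injective
      (fun l : Fin k => (I.1.orderIsoOfFin I.2).symm ⟨T l, hmem l⟩) := by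
    intro l1 l2 h12
    apply hinj
    have := congrArg (fun x => ((I.1.orderIsoOfFin I.2) x).1) h12
    simpa using this
  let πe : Equiv.Perm (Fin k) :=
    Equiv.ofBijective _ ((Finite.injective_iff_bijective).1 hπinj)
  have hM : (Matrix.of fun (l l' : Fin k) =>
      (Pi.single (T l) (1 : ℂ) : Fin n → ℂ) ((I.1.orderIsoOfFin I.2 l').1))
      = Matrix.of (fun l => (1 : Matrix (Fin k) (Fin k) ℂ) (πe l)) := by
    funext l l'
    show (Pi.single (T l) (1 : ℂ) : Fin n → ℂ) ((I.1.orderIsoOfFin I.2 l').1)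
      = (1 : Matrix (Fin k) (Fin k) ℂ) (πe l) l'
    rw [Pi.single_apply, Matrix.one_apply]
    have hfwd : (I.1.orderIsoOfFin I.2 l').1 = T l → πe l = l' := by
      intro he
      have h1 : (I.1.orderIsoOfFin I.2) l' = ⟨T l, hmem l⟩ := Subtype.ext he
      show (I.1.orderIsoOfFin I.2).symm ⟨T l, hmem l⟩ = l'
      rw [← h1, OrderIso.symm_apply_apply]
    by_cases hc : πe l = l'
    · rw [if_pos, if_pos hc]
      rw [← hc]
      show ((I.1.orderIsoOfFin I.2) ((I.1.orderIsoOfFin I.2).symm ⟨T l, hmem l⟩)).1 = T l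
      rw [OrderIso.apply_symm_apply]
    · rw [if_neg, if_neg hc]
      intro he
      exact hc (hfwd he)
  unfold eT wedgek
  rw [hM]
  have hdet : Matrix.det (Matrix.of (fun l => (1 : Matrix (Fin k) (Fin k) ℂ) (πe l)))
      = ((Equiv.Perm.sign πe : ℤ) : ℂ) := by
    have := Matrix.det_permute πe (1 : Matrix (Fin k) (Fin k) ℂ)
    simp [Matrix.submatrix] at this; exact this
  rw [hdet]
  rcases Int.units_eq_one_or (Equiv.Perm.sign πe) with h | h <;> rw [h] <;> norm_num

lemma indep_of_transversal {n k : ℕ} {b : Fin n → Fin k → ℂ} (hk : 0 < k)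
    (A : Elementary n k b) (L : Finset (Fin n)) (hLk : L.card = k)
    (hLsub : L ⊆ A.JLam) (s : (h : Fin A.m) → Fin (A.lam h + 1))
    (hs : ∀ h, A.Jset h \ L = {A.elt h (s h)}) :
    Indep b L := by
  classical
  have hLJ : ∀ h : Fin A.m, ∀ j ∈ A.Jset h, j ≠ A.elt h (s h) → j ∈ L := by
    intro h j hj hne
    by_contra hj'
    have hmem : j ∈ A.Jset h \ L := Finset.mem_sdiff.mpr ⟨hj, hj'⟩
    rw [hs h] at hmem
    exact hne (Finset.mem_singleton.mp hmem)
  have key : ∀ t ≤ A.m,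
      Submodule.span ℂ (b '' {j | ∃ h' : Fin A.m, (h' : ℕ) < t ∧ j ∈ A.Jset h' ∧ j ∈ L})
        = Submodule.span ℂ (b '' {j | ∃ h' : Fin A.m, (h' : ℕ) < t ∧ j ∈ A.Jset h'}) := by
    intro t
    induction t with
    | zero =>
      intro _
      have e1 : {j : Fin n | ∃ h' : Fin A.m, (h' : ℕ) < 0 ∧ j ∈ A.Jset h' ∧ j ∈ L}
          = {j : Fin n | ∃ h' : Fin A.m, (h' : ℕ) < 0 ∧ j ∈ A.Jset h'} := by
        ext j; simp
      rw [e1]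
    | succ t ih =>
      intro ht
      have htm : t < A.m := ht
      set hT : Fin A.m := ⟨t, htm⟩ with hhT
      set jt := A.elt hT (s hT) with hjt
      have hpre : {j : Fin n | ∃ h' : Fin A.m, (h' : ℕ) < t + 1 ∧ j ∈ A.Jset h'}
          = {j : Fin n | ∃ h' ≤ hT, j ∈ A.Jset h'} := by
        ext j
        constructor
        · rintro ⟨h', hlt, hj⟩
          refine ⟨h', ?_, hj⟩
          rw [Fin.le_def]
          show (h' : ℕ) ≤ t
          omega
        · rintro ⟨h', hle, hj⟩
          rw [Fin.le_def] at hle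
          have hle' : (h' : ℕ) ≤ t := hle
          exact ⟨h', by omega, hj⟩
      have hrank1 := A.rank_eq hT
      have hrank2 := A.rank_erase hT jt (A.elt_mem hT (s hT))
      have hspaneq : Submodule.span ℂ (b '' ({j | ∃ h' ≤ hT, j ∈ A.Jset h'} \ {jt}))
          = Submodule.span ℂ (b '' {j | ∃ h' ≤ hT, j ∈ A.Jset h'}) := by
        apply Submodule.eq_of_le_of_finrank_eq
        · exact Submodule.span_mono (Set.image_mono Set.diff_subset)
        · rw [hrank2, hrank1]
      have hsub : {j : Fin n | ∃ h' ≤ hT, j ∈ A.Jset h'} \ {jt}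
          ⊆ {j : Fin n | ∃ h' : Fin A.m, (h' : ℕ) < t ∧ j ∈ A.Jset h'}
            ∪ {j : Fin n | ∃ h' : Fin A.m, (h' : ℕ) < t + 1 ∧ j ∈ A.Jset h' ∧ j ∈ L} := by
        rintro j ⟨⟨h', hle, hj⟩, hne⟩
        rw [Fin.le_def] at hle
        have hle' : (h' : ℕ) ≤ t := hle
        rcases Nat.lt_or_ge (h' : ℕ) t with hlt | hge
        · exact Or.inl ⟨h', hlt, hj⟩
        · have hh' : h' = hT := Fin.ext (by show (h' : ℕ) = t; omega)
          have hjne : j ≠ jt := by simpa using hne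
          exact Or.inr ⟨hT, by show t < t + 1; omega, hh' ▸ hj, hLJ hT j (hh' ▸ hj) hjne⟩
      apply le_antisymm
      · refine Submodule.span_mono (Set.image_mono ?_)
        rintro j ⟨h', hlt, hj, -⟩
        exact ⟨h', hlt, hj⟩
      · rw [hpre, ← hspaneq]
        refine le_trans (Submodule.span_mono (Set.image_mono hsub)) ?_
        rw [Set.image_union, Submodule.span_union, ← ih (le_of_lt htm)]
        refine sup_le (Submodule.span_mono (Set.image_mono ?_)) le_rfl
        rintro j ⟨h', hlt, hj, hl⟩
        exact ⟨h', by omega, hj, hl⟩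
  have hm : 0 < A.m := by
    obtain ⟨x, hx⟩ := Finset.card_pos.mp (by rw [hLk]; exact hk)
    obtain ⟨h', -, -⟩ := Finset.mem_biUnion.mp (hLsub hx)
    exact h'.pos
  have hLPm : {j : Fin n | ∃ h' : Fin A.m, (h' : ℕ) < A.m ∧ j ∈ A.Jset h' ∧ j ∈ L}
      = ↑L := by
    ext j
    simp only [Set.mem_setOf_eq, Finset.mem_coe]
    constructor
    · rintro ⟨h', -, -, hj⟩; exact hj
    · intro hj
      obtain ⟨h', -, hj'⟩ := Finset.mem_biUnion.mp (hLsub hj)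
      exact ⟨h', h'.isLt, hj', hj⟩
  set hlast : Fin A.m := ⟨A.m - 1, by omega⟩ with hhlast
  have hPm : {j : Fin n | ∃ h' : Fin A.m, (h' : ℕ) < A.m ∧ j ∈ A.Jset h'}
      = {j : Fin n | ∃ h' ≤ hlast, j ∈ A.Jset h'} := by
    ext j
    constructor
    · rintro ⟨h', -, hj⟩
      refine ⟨h', ?_, hj⟩
      rw [Fin.le_def]
      show (h' : ℕ) ≤ A.m - 1
      have := h'.isLt
      omega
    · rintro ⟨h', -, hj⟩
      exact ⟨h', h'.isLt, hj⟩
  have hfin : Module.finrank ℂ (Submodule.span ℂ (b '' ↑L)) = k := by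
    have e := key A.m le_rfl
    rw [hLPm, hPm] at e
    rw [e, A.rank_eq hlast, Finset.filter_true_of_mem, A.lam_sum]
    intro h' _
    rw [Fin.le_def]
    show (h' : ℕ) ≤ A.m - 1
    have := h'.isLt
    omega
  unfold Indep
  rw [linearIndependent_iff_card_eq_finrank_span]
  have hrange : (Set.range fun j : L => b j) = b '' ↑L := by
    ext x
    simp [Set.mem_image]
  rw [hrange]
  show Fintype.card L = Module.finrank ℂ (Submodule.span ℂ (b '' ↑L))
  rw [hfin, Fintype.card_coe, hLk]

end ArrPaper



/-- **Formula (6.5) of the paper.** For distinguished elements `I`, `L` of an elementary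
subarrangement `(J_1,…,J_m)` with complementary positions `u_h`, `s_h` (`0`-based), the
normalized singular element `s_{T_I}` pairs with `e_{T_L}` to
`(∏_h (−1)^{u_h+s_h}) ∏_{j∈J_λ} a_j`. -/
theorem stmt11 (n k : ℕ) (hk : 0 < k) (hkn : k < n)
    (b : Fin n → Fin k → ℂ) (hb0 : ∀ j, b j ≠ 0)
    (hbspan : Submodule.span ℂ (Set.range b) = ⊤)
    (a : Fin n → ℂ) (ha : ∀ j, a j ≠ 0)
    (A : Elementary n k b)
    (I L : Finset (Fin n))
    (hI : A.Distinguished I) (hL : A.Distinguished L)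
    (hIk : I.card = k) (hLk : L.card = k)
    (hIc : ∀ h, (I ∩ A.Jset h).card = A.lam h)
    (hLc : ∀ h, (L ∩ A.Jset h).card = A.lam h)
    -- `u h`, `s h`: positions (in the increasing ordering of `J_h`) of the unique
    -- elements of `J_h ∖ I` and `J_h ∖ L`
    (u s : (h : Fin A.m) → Fin (A.lam h + 1))
    (hu : ∀ h, A.Jset h \ I = {A.elt h (u h)})
    (hs : ∀ h, A.Jset h \ L = {A.elt h (s h)})
    -- the sign normalizing the singular element with respect to `T_I`
    (eps : ℂ) (heps : eps = 1 ∨ eps = -1)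
    (hcoeff : coeffAt (A.concatI I hIc) ⟨I, hIk⟩ (eps • A.sElem a)
      = ∏ h, a (A.elt h (u h))) :
    Sform b a (eps • A.sElem a) (eT (A.concatI L hLc))
      = (∏ h, (-1 : ℂ) ^ ((u h : ℕ) + (s h : ℕ))) * ∏ j ∈ A.JLam, a j := by
  classical
  obtain ⟨-, hLsub, -⟩ := hL
  obtain ⟨-, hIsub, -⟩ := hI
  have heltinj : ∀ h : Fin A.m, Function.Injective (A.elt h) := by
    intro h i1 i2 h12
    exact ((A.Jset h).orderIsoOfFin (A.card_eq h)).injective (Subtype.ext h12)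
  have heraseL : ∀ h, A.Jset h \ {A.elt h (s h)} = L ∩ A.Jset h := by
    intro h
    rw [← hs h, Finset.sdiff_sdiff_self_left, Finset.inter_comm]
  have heraseI : ∀ h, A.Jset h \ {A.elt h (u h)} = I ∩ A.Jset h := by
    intro h
    rw [← hu h, Finset.sdiff_sdiff_self_left, Finset.inter_comm]
  -- the image of the concatenated tuple is the set itself
  have genImage : ∀ (M : Finset (Fin n)) (hMsub : M ⊆ A.JLam)
      (hMc : ∀ h, (M ∩ A.Jset h).card = A.lam h),
      Finset.image (A.concatI M hMc) Finset.univ = M := by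
    intro M hMsub hMc
    apply Finset.Subset.antisymm
    · intro x hx
      obtain ⟨l, -, rfl⟩ := Finset.mem_image.mp hx
      obtain ⟨h, i, hfi⟩ :=
        (exists_concatTuple_eq A.lam A.lam_sum _ (A.concatI M hMc l)).1 ⟨l, rfl⟩
      rw [← hfi]
      exact Finset.mem_of_mem_inter_left ((M ∩ A.Jset h).orderIsoOfFin (hMc h) i).2
    · intro x hx
      obtain ⟨h, -, hxh⟩ := Finset.mem_biUnion.mp (hMsub hx)
      have hxm : x ∈ M ∩ A.Jset h := Finset.mem_inter.mpr ⟨hx, hxh⟩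
      obtain ⟨i, hi⟩ := ((M ∩ A.Jset h).orderIsoOfFin (hMc h)).surjective ⟨x, hxm⟩
      obtain ⟨l, hl⟩ := (exists_concatTuple_eq A.lam A.lam_sum
        (fun h l => ((M ∩ A.Jset h).orderIsoOfFin (hMc h) l).1) x).2
        ⟨h, i, congrArg Subtype.val hi⟩
      exact Finset.mem_image.mpr ⟨l, Finset.mem_univ l, hl⟩
  have genInj : ∀ (M : Finset (Fin n)) (hMk : M.card = k)
      (hMc : ∀ h, (M ∩ A.Jset h).card = A.lam h),
      Finset.image (A.concatI M hMc) Finset.univ = M →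
      Function.Injective (A.concatI M hMc) := by
    intro M hMk hMc him
    have hcard : (Finset.image (A.concatI M hMc) Finset.univ).card
        = (Finset.univ : Finset (Fin k)).card := by
      rw [him, hMk, Finset.card_univ, Fintype.card_fin]
    have hinj := Finset.card_image_iff.mp hcard
    intro a1 a2 h12
    exact hinj (Finset.mem_coe.mpr (Finset.mem_univ a1))
      (Finset.mem_coe.mpr (Finset.mem_univ a2)) h12
  have himL := genImage L hLsub hLc
  have himI := genImage I hIsub hIc
  have hinjL := genInj L hLk hLc himL
  have hinjI := genInj I hIk hIc himI
  have hmemL : ∀ l, A.concatI L hLc l ∈ L := by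
    intro l
    have hh := Finset.mem_image_of_mem (A.concatI L hLc) (Finset.mem_univ l)
    rwa [himL] at hh
  have hmemI : ∀ l, A.concatI I hIc l ∈ I := by
    intro l
    have hh := Finset.mem_image_of_mem (A.concatI I hIc) (Finset.mem_univ l)
    rwa [himI] at hh
  have heL : eT (A.concatI L hLc) ⟨L, hLk⟩ * eT (A.concatI L hLc) ⟨L, hLk⟩ = 1 :=
    eT_mul_self _ _ hinjL hmemL
  have heI : eT (A.concatI I hIc) ⟨I, hIk⟩ * eT (A.concatI I hIc) ⟨I, hIk⟩ = 1 :=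
    eT_mul_self _ _ hinjI hmemI
  -- the omit tuples agree with the concatenated tuples
  have hfeqL : (fun (h : Fin A.m) (l : Fin (A.lam h)) =>
      ((L ∩ A.Jset h).orderIsoOfFin (hLc h) l).1) = (fun h => A.omit h (s h)) := by
    funext h i
    unfold Elementary.omit
    exact (orderIsoOfFin_val_congr (by rw [Finset.erase_eq, heraseL h]) _ _ i).symm
  have hfeqI : (fun (h : Fin A.m) (l : Fin (A.lam h)) =>
      ((I ∩ A.Jset h).orderIsoOfFin (hIc h) l).1) = (fun h => A.omit h (u h)) := by
    funext h i
    unfold Elementary.omit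
    exact (orderIsoOfFin_val_congr (by rw [Finset.erase_eq, heraseI h]) _ _ i).symm
  have htupL : A.concatI L hLc
      = concatTuple A.lam A.lam_sum (fun h => A.omit h (s h)) := by
    unfold Elementary.concatI
    exact congrArg (concatTuple A.lam A.lam_sum) hfeqL
  have htupI : A.concatI I hIc
      = concatTuple A.lam A.lam_sum (fun h => A.omit h (u h)) := by
    unfold Elementary.concatI
    exact congrArg (concatTuple A.lam A.lam_sum) hfeqI
  -- evaluation of the singular element at a transversal set
  have hvalM : ∀ (M : Finset (Fin n)) (hMk : M.card = k)
      (w : (h : Fin A.m) → Fin (A.lam h + 1))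
      (hw : ∀ h, A.Jset h \ M = {A.elt h (w h)}),
      A.sElem a ⟨M, hMk⟩
        = (∏ h, (-1 : ℂ) ^ ((w h : ℕ)) * a (A.elt h (w h)))
          * eT (concatTuple A.lam A.lam_sum (fun h => A.omit h (w h))) ⟨M, hMk⟩ := by
    intro M hMk w hw
    unfold Elementary.sElem
    rw [Finset.sum_apply]
    refine (Finset.sum_eq_single w ?_ ?_).trans ?_
    · intro t _ htw
      rw [Pi.smul_apply, smul_eq_mul]
      have hex : ∃ h0, t h0 ≠ w h0 := by
        by_contra hc
        push_neg at hc
        exact htw (funext hc)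
      obtain ⟨h0, h0ne⟩ := hex
      have hx : A.elt h0 (w h0) ∉ M := by
        have hmm : A.elt h0 (w h0) ∈ A.Jset h0 \ M := by
          rw [hw h0]; exact Finset.mem_singleton_self _
        exact (Finset.mem_sdiff.mp hmm).2
      have hxim : A.elt h0 (w h0) ∈ Finset.image
          (concatTuple A.lam A.lam_sum (fun h => A.omit h (t h))) Finset.univ := by
        have hmm : A.elt h0 (w h0) ∈ (A.Jset h0).erase (A.elt h0 (t h0)) :=
          Finset.mem_erase.mpr
            ⟨fun hcon => h0ne ((heltinj h0 hcon).symm ▸ rfl), A.elt_mem h0 (w h0)⟩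
        obtain ⟨i, hi⟩ := (((A.Jset h0).erase (A.elt h0 (t h0))).orderIsoOfFin
          (A.card_erase h0 (t h0))).surjective ⟨_, hmm⟩
        obtain ⟨l, hl⟩ := (exists_concatTuple_eq A.lam A.lam_sum
          (fun h => A.omit h (t h)) _).2 ⟨h0, i, by unfold Elementary.omit; rw [hi]⟩
        exact Finset.mem_image.mpr ⟨l, Finset.mem_univ l, hl⟩
      have h0' : eT (concatTuple A.lam A.lam_sum (fun h => A.omit h (t h))) ⟨M, hMk⟩ = 0 :=
        eT_eq_zero _ _ (fun hEq => hx
          (show A.elt h0 (w h0) ∈ (⟨M, hMk⟩ : KSub n k).1 from hEq ▸ hxim))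
      rw [h0', mul_zero]
    · intro hn
      exact absurd (Finset.mem_univ w) hn
    · rw [Pi.smul_apply, smul_eq_mul]
  -- independence of L
  have hindep : Indep b L := indep_of_transversal hk A L hLk hLsub s hs
  -- the bilinear form picks out the L-coordinate
  have hSf : Sform b a (eps • A.sElem a) (eT (A.concatI L hLc))
      = (∏ i ∈ L, a i) * ((eps • A.sElem a) ⟨L, hLk⟩)
        * eT (A.concatI L hLc) ⟨L, hLk⟩ := by
    unfold Sform
    refine (Finset.sum_eq_single (⟨L, hLk⟩ : KSub n k) ?_ ?_).trans ?_
    · intro I' _ hne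
      have h0 : eT (A.concatI L hLc) I' = 0 :=
        eT_eq_zero _ _ (fun h => hne (Subtype.ext (h.symm.trans himL)))
      rw [h0, mul_zero]
      simp
    · intro hn
      exact absurd (Finset.mem_univ _) hn
    · rw [if_pos hindep]
  -- coefficient identities
  have hsL : A.sElem a ⟨L, hLk⟩
      = (∏ h, (-1 : ℂ) ^ ((s h : ℕ)) * a (A.elt h (s h)))
        * eT (A.concatI L hLc) ⟨L, hLk⟩ := by
    rw [hvalM L hLk s hs, htupL]
  have hsI : A.sElem a ⟨I, hIk⟩
      = (∏ h, (-1 : ℂ) ^ ((u h : ℕ)) * a (A.elt h (u h)))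
        * eT (A.concatI I hIc) ⟨I, hIk⟩ := by
    rw [hvalM I hIk u hu, htupI]
  have hQ : (∏ h, a (A.elt h (u h))) ≠ 0 :=
    Finset.prod_ne_zero_iff.mpr (fun h _ => ha _)
  have hepsP : eps * ∏ h, (-1 : ℂ) ^ ((u h : ℕ)) = 1 := by
    have hc := hcoeff
    unfold coeffAt at hc
    rw [Pi.smul_apply, smul_eq_mul, hsI, Finset.prod_mul_distrib] at hc
    have h1 : eps * (∏ h, (-1 : ℂ) ^ ((u h : ℕ))) * (∏ h, a (A.elt h (u h)))
        * (eT (A.concatI I hIc) ⟨I, hIk⟩ * eT (A.concatI I hIc) ⟨I, hIk⟩)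
        = ∏ h, a (A.elt h (u h)) := by
      calc eps * (∏ h, (-1 : ℂ) ^ ((u h : ℕ))) * (∏ h, a (A.elt h (u h)))
            * (eT (A.concatI I hIc) ⟨I, hIk⟩ * eT (A.concatI I hIc) ⟨I, hIk⟩)
          = eT (A.concatI I hIc) ⟨I, hIk⟩
            * (eps * (((∏ h, (-1 : ℂ) ^ ((u h : ℕ))) * ∏ h, a (A.elt h (u h)))
              * eT (A.concatI I hIc) ⟨I, hIk⟩)) := by ring
        _ = ∏ h, a (A.elt h (u h)) := hc
    rw [heI, mul_one] at h1
    have h2 : eps * (∏ h, (-1 : ℂ) ^ ((u h : ℕ))) * (∏ h, a (A.elt h (u h)))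
        = 1 * ∏ h, a (A.elt h (u h)) := by rw [h1, one_mul]
    exact mul_right_cancel₀ hQ h2
  have hPP : (∏ h, (-1 : ℂ) ^ ((u h : ℕ))) * (∏ h, (-1 : ℂ) ^ ((u h : ℕ))) = 1 := by
    rw [← Finset.prod_mul_distrib]
    apply Finset.prod_eq_one
    intro h _
    rw [← pow_add]
    exact Even.neg_one_pow ⟨(u h : ℕ), rfl⟩
  have heps' : eps = ∏ h, (-1 : ℂ) ^ ((u h : ℕ)) := by
    calc eps = eps * ((∏ h, (-1 : ℂ) ^ ((u h : ℕ))) * ∏ h, (-1 : ℂ) ^ ((u h : ℕ))) := by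
          rw [hPP, mul_one]
      _ = (eps * ∏ h, (-1 : ℂ) ^ ((u h : ℕ))) * ∏ h, (-1 : ℂ) ^ ((u h : ℕ)) := by ring
      _ = ∏ h, (-1 : ℂ) ^ ((u h : ℕ)) := by rw [hepsP, one_mul]
  -- the product over J_λ
  have hdisj : Set.PairwiseDisjoint (↑(Finset.univ : Finset (Fin A.m))) A.Jset :=
    fun x _ y _ hxy => A.disj x y hxy
  have hdisj2 : Set.PairwiseDisjoint (↑(Finset.univ : Finset (Fin A.m)))
      (fun h => L ∩ A.Jset h) :=
    fun x _ y _ hxy =>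
      (A.disj x y hxy).mono Finset.inter_subset_right Finset.inter_subset_right
  have hprodJ : ∏ j ∈ A.JLam, a j
      = (∏ h, a (A.elt h (s h))) * ∏ j ∈ L, a j := by
    unfold Elementary.JLam
    rw [Finset.prod_biUnion hdisj]
    have hLdecomp : ∏ j ∈ L, a j = ∏ h, ∏ j ∈ L ∩ A.Jset h, a j := by
      rw [← Finset.prod_biUnion hdisj2]
      congr 1
      ext j
      simp only [Finset.mem_biUnion, Finset.mem_inter, Finset.mem_univ, true_and]
      constructor
      · intro hj
        obtain ⟨h, -, hjh⟩ := Finset.mem_biUnion.mp (hLsub hj)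
        exact ⟨h, hj, hjh⟩
      · rintro ⟨h, hj, -⟩
        exact hj
    rw [hLdecomp, ← Finset.prod_mul_distrib]
    apply Finset.prod_congr rfl
    intro h _
    rw [← Finset.mul_prod_erase (A.Jset h) a (A.elt_mem h (s h))]
    congr 1
    rw [Finset.erase_eq, heraseL h]
  have hpowsum : ∏ h, (-1 : ℂ) ^ ((u h : ℕ) + (s h : ℕ))
      = (∏ h, (-1 : ℂ) ^ ((u h : ℕ))) * ∏ h, (-1 : ℂ) ^ ((s h : ℕ)) := by
    rw [← Finset.prod_mul_distrib]
    apply Finset.prod_congr rfl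
    intro h _
    rw [pow_add]
  rw [hSf, Pi.smul_apply, smul_eq_mul, hsL, Finset.prod_mul_distrib, heps',
    hprodJ, hpowsum]
  calc (∏ i ∈ L, a i) * ((∏ h, (-1 : ℂ) ^ ((u h : ℕ)))
        * ((∏ h, (-1 : ℂ) ^ ((s h : ℕ))) * (∏ h, a (A.elt h (s h)))
          * eT (A.concatI L hLc) ⟨L, hLk⟩))
        * eT (A.concatI L hLc) ⟨L, hLk⟩
      = (∏ h, (-1 : ℂ) ^ ((u h : ℕ))) * (∏ h, (-1 : ℂ) ^ ((s h : ℕ)))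
        * ((∏ h, a (A.elt h (s h))) * ∏ i ∈ L, a i)
        * (eT (A.concatI L hLc) ⟨L, hLk⟩ * eT (A.concatI L hLc) ⟨L, hLk⟩) := by ring
    _ = (∏ h, (-1 : ℂ) ^ ((u h : ℕ))) * (∏ h, (-1 : ℂ) ^ ((s h : ℕ)))
        * ((∏ h, a (A.elt h (s h))) * ∏ j ∈ L, a j) := by rw [heL, mul_one]
end
end

section
/- Let (J_1,…,J_m) be an elementary subarrangement of type λ with prepotential of first kind P_{J_λ}, and let I = {i_1,…,i_k} and L = {l_1,…,l_k} be independent k-element subsets of J. If I is not a distinguished element of (J_1,…,J_m) or L is not a distinguished element of (J_1,…,J_m), then the iterated partial derivative ∂^{2k} P_{J_λ} / ∂z_{i_1} ⋯ ∂z_{i_k} ∂z_{l_1} ⋯ ∂z_{l_k} is the zero polynomial. -/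
open scoped BigOperators
open Classical

noncomputable section

namespace ArrPaper

variable {n k : ℕ} {b : Fin n → Fin k → ℂ}

/-- The block determinant `D_{i,h} = d_{(j_1^h,…,ĵ_i^h,…,j_{λ_h+1}^h);h}`, computed in
the adapted coordinates `cC`: its `(r,ℓ)` entry is the coordinate of `b` at the
`ℓ`-th element of `J_h ∖ {j_i^h}` with respect to the basis vector number
`λ^{h−1} + r`. -/
def Elementary.DD (A : Elementary n k b) (cC : Fin n → Fin k → ℂ)
    (h : Fin A.m) (i : Fin (A.lam h + 1)) : ℂ :=
  Matrix.det (Matrix.of fun (r l : Fin (A.lam h)) =>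
    cC (A.omit h i l) (blockIdx A.lam A.lam_sum h r))

/-- The linear form `f_{J_λ,h}`, as a polynomial in `z_1,…,z_n`. -/
def Elementary.fpol (A : Elementary n k b) (cC : Fin n → Fin k → ℂ)
    (eN : Fin A.m → Fin n → ℂ) (h : Fin A.m) : MvPolynomial (Fin n) ℂ :=
  (∑ i : Fin (A.lam h + 1),
      MvPolynomial.C ((-1 : ℂ) ^ (i : ℕ) * A.DD cC h i) * MvPolynomial.X (A.elt h i))
    + ∑ j : Fin n, MvPolynomial.C (eN h j) * MvPolynomial.X j

/-- The prepotential of first kind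
`P_{J_λ} = ∏_h (∏_{j∈J_h} a_j) f_{J_λ,h}^{2λ_h} / ((2λ_h)! (∏_i D_{i,h})²)`. -/
def Elementary.prepot (A : Elementary n k b) (a : Fin n → ℂ)
    (cC : Fin n → Fin k → ℂ) (eN : Fin A.m → Fin n → ℂ) : MvPolynomial (Fin n) ℂ :=
  ∏ h : Fin A.m,
    MvPolynomial.C ((∏ j ∈ A.Jset h, a j) *
        ((Nat.factorial (2 * A.lam h) : ℂ) * (∏ i, A.DD cC h i) ^ 2)⁻¹) *
      (A.fpol cC eN h) ^ (2 * A.lam h)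

/-- Admissibility of the choices `(sB, cC, eN)` for an elementary subarrangement:
`sB` is a unimodular basis adapted to the filtration `X_1^* ⊆ ⋯ ⊆ X_m^*`, `cC` gives
the coordinates of the `b_j` in this basis, and `eN h` gives the coefficients `e_j`
(supported on `J_1 ∪ ⋯ ∪ J_{h−1}`) completing the linear relation defining
`f_{J_λ,h}`. -/
def Elementary.ChoiceOK (A : Elementary n k b)
    (sB : Fin k → Fin k → ℂ) (cC : Fin n → Fin k → ℂ)
    (eN : Fin A.m → Fin n → ℂ) : Prop :=
  Matrix.det (Matrix.of fun (i l : Fin k) => sB l i) = 1 ∧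
  (∀ j, b j = ∑ i : Fin k, cC j i • sB i) ∧
  (∀ h : Fin A.m, Submodule.span ℂ
      {v : Fin k → ℂ | ∃ i : Fin k,
        (i : ℕ) < ∑ h' ∈ Finset.univ.filter (fun h' => h' ≤ h), A.lam h' ∧ v = sB i}
    = A.Xstar h) ∧
  (∀ h j, eN h j ≠ 0 → ∃ h' < h, j ∈ A.Jset h') ∧
  (∀ h : Fin A.m,
    (∑ i : Fin (A.lam h + 1), ((-1 : ℂ) ^ (i : ℕ) * A.DD cC h i) • b (A.elt h i))
      + ∑ j : Fin n, eN h j • b j = 0)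

/-- Iterated formal partial derivative along a list of variables. -/
def pderivList (L : List (Fin n)) (p : MvPolynomial (Fin n) ℂ) :
    MvPolynomial (Fin n) ℂ :=
  L.foldl (fun q r => MvPolynomial.pderiv r q) p

/-- `d_T`: determinant of the matrix whose `ℓ`-th column is `b (T ℓ)`. -/
def dtup (b : Fin n → Fin k → ℂ) (T : Fin k → Fin n) : ℂ :=
  Matrix.det (Matrix.of fun (r l : Fin k) => b (T l) r)

/-- The potential of first kind: the (finite) sum over all elementary subarrangements
of `(1/a(J_λ,J)) P_{J_λ}`, with the choices in the definition of the prepotentials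
fixed once for each elementary subarrangement. -/
def Potential1 (b : Fin n → Fin k → ℂ) (a : Fin n → ℂ)
    (cC : Elementary n k b → Fin n → Fin k → ℂ)
    (eN : (A : Elementary n k b) → Fin A.m → Fin n → ℂ) : MvPolynomial (Fin n) ℂ :=
  ∑ᶠ A : Elementary n k b, MvPolynomial.C (A.aW a)⁻¹ * A.prepot a (cC A) (eN A)

end ArrPaper

namespace ArrPaper

variable {n k : ℕ} {b : Fin n → Fin k → ℂ}

open MvPolynomial

/-- weighted degree of an exponent vector -/
def wdeg (w : Fin n → ℕ) (d : Fin n →₀ ℕ) : ℕ := ∑ j, w j * d j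

lemma wdeg_add (w : Fin n → ℕ) (d e : Fin n →₀ ℕ) :
    wdeg w (d + e) = wdeg w d + wdeg w e := by
  simp [wdeg, mul_add, Finset.sum_add_distrib]

lemma wdeg_single (w : Fin n → ℕ) (r : Fin n) : wdeg w (Finsupp.single r 1) = w r := by
  simp [wdeg, Finsupp.single_apply, mul_ite]

def DegLe (w : Fin n → ℕ) (p : MvPolynomial (Fin n) ℂ) (D : ℕ) : Prop :=
  ∀ d ∈ p.support, wdeg w d ≤ D

lemma DegLe.mono {w : Fin n → ℕ} {p : MvPolynomial (Fin n) ℂ} {D D' : ℕ}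
    (h : DegLe w p D) (hD : D ≤ D') : DegLe w p D' :=
  fun d hd => (h d hd).trans hD

lemma degLe_zero (w : Fin n → ℕ) (D : ℕ) : DegLe w (0 : MvPolynomial (Fin n) ℂ) D := by
  intro d hd; simp at hd

lemma degLe_C (w : Fin n → ℕ) (c : ℂ) : DegLe w (C c) 0 := by
  intro d hd
  rw [mem_support_iff, coeff_C] at hd
  split at hd
  · rename_i h; subst h; simp [wdeg]
  · simp at hd

lemma degLe_X (w : Fin n → ℕ) (j : Fin n) : DegLe w (X j) (w j) := by
  intro d hd
  rw [mem_support_iff, coeff_X'] at hd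
  split at hd
  · rename_i h; rw [← h, wdeg_single]
  · simp at hd

lemma degLe_add {w : Fin n → ℕ} {p q : MvPolynomial (Fin n) ℂ} {D : ℕ}
    (hp : DegLe w p D) (hq : DegLe w q D) : DegLe w (p + q) D := by
  intro d hd
  rcases Finset.mem_union.mp (MvPolynomial.support_add hd) with h | h
  · exact hp d h
  · exact hq d h

lemma degLe_mul {w : Fin n → ℕ} {p q : MvPolynomial (Fin n) ℂ} {D E : ℕ}
    (hp : DegLe w p D) (hq : DegLe w q E) : DegLe w (p * q) (D + E) := by
  intro d hd
  obtain ⟨d1, h1, d2, h2, rfl⟩ := Finset.mem_add.mp (MvPolynomial.support_mul p q hd)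
  rw [wdeg_add]
  exact Nat.add_le_add (hp d1 h1) (hq d2 h2)

lemma degLe_sum {ι : Type*} {w : Fin n → ℕ} {D : ℕ} (s : Finset ι)
    (f : ι → MvPolynomial (Fin n) ℂ) (h : ∀ i ∈ s, DegLe w (f i) D) :
    DegLe w (∑ i ∈ s, f i) D := by
  induction s using Finset.cons_induction with
  | empty => simpa using degLe_zero w D
  | cons i s his ih =>
      rw [Finset.sum_cons]
      exact degLe_add (h i (Finset.mem_cons_self i s))
        (ih fun i hi => h i (Finset.mem_cons_of_mem hi))

lemma degLe_one (w : Fin n → ℕ) : DegLe w (1 : MvPolynomial (Fin n) ℂ) 0 := by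
  simpa using degLe_C w 1

lemma degLe_pow {w : Fin n → ℕ} {p : MvPolynomial (Fin n) ℂ} {D : ℕ}
    (hp : DegLe w p D) (e : ℕ) : DegLe w (p ^ e) (e * D) := by
  induction e with
  | zero => simpa using degLe_one w
  | succ e ih =>
      rw [pow_succ]
      have := degLe_mul ih hp
      exact this.mono (by ring_nf; omega)

lemma degLe_prod {ι : Type*} {w : Fin n → ℕ} (s : Finset ι)
    (f : ι → MvPolynomial (Fin n) ℂ) (D : ι → ℕ)
    (h : ∀ i ∈ s, DegLe w (f i) (D i)) :
    DegLe w (∏ i ∈ s, f i) (∑ i ∈ s, D i) := by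
  induction s using Finset.cons_induction with
  | empty => simpa using degLe_one w
  | cons i s his ih =>
      rw [Finset.prod_cons, Finset.sum_cons]
      exact degLe_mul (h i (Finset.mem_cons_self i s))
        (ih fun i hi => h i (Finset.mem_cons_of_mem hi))

lemma coeff_pderiv (r : Fin n) (p : MvPolynomial (Fin n) ℂ) (d : Fin n →₀ ℕ) :
    coeff d (pderiv r p) = ((d r : ℂ) + 1) * coeff (d + Finsupp.single r 1) p := by
  induction p using MvPolynomial.induction_on' with
  | add p q hp hq => simp [map_add, hp, hq, mul_add]
  | monomial s c =>
      rw [pderiv_monomial, coeff_monomial, coeff_monomial]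
      by_cases h : s = d + Finsupp.single r 1
      · subst h
        rw [if_pos (add_tsub_cancel_right _ _), if_pos rfl, Finsupp.add_apply,
          Finsupp.single_eq_same]
        push_cast
        ring
      · rw [if_neg h, mul_zero]
        split
        · rename_i h2
          rcases Nat.eq_zero_or_pos (s r) with h3 | h3
          · simp [h3]
          · exfalso
            apply h
            rw [← h2, tsub_add_cancel_of_le]
            exact (Finsupp.single_le_iff).mpr h3
        · rfl

lemma pderivList_eq_zero_of_wdeg_lt (w : Fin n → ℕ) :
    ∀ (L : List (Fin n)) (p : MvPolynomial (Fin n) ℂ),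
      (∀ d ∈ p.support, wdeg w d < (L.map w).sum) → pderivList L p = 0 := by
  intro L
  induction L with
  | nil =>
      intro p hp
      have : p.support = ∅ := by
        by_contra h
        obtain ⟨d, hd⟩ := Finset.nonempty_iff_ne_empty.mpr h
        exact absurd (hp d hd) (by simp)
      exact MvPolynomial.support_eq_empty.mp this
  | cons r L ih =>
      intro p hp
      show pderivList L (pderiv r p) = 0
      apply ih
      intro d hd
      rw [mem_support_iff, coeff_pderiv] at hd
      have hne : coeff (d + Finsupp.single r 1) p ≠ 0 := by
        intro h; rw [h, mul_zero] at hd; exact hd rfl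
      have := hp _ (mem_support_iff.mpr hne)
      rw [wdeg_add, wdeg_single] at this
      simp only [List.map_cons, List.sum_cons] at this
      omega

lemma sum_map_indicator {I : Finset (Fin n)} (hIk : I.card = k) (w : Fin n → ℕ) :
    ((List.ofFn fun l : Fin k => ((I.orderIsoOfFin hIk l) : Fin n)).map w).sum
      = ∑ j ∈ I, w j := by
  rw [List.map_ofFn, List.sum_ofFn]
  rw [← Finset.sum_coe_sort I w]
  exact Fintype.sum_equiv (I.orderIsoOfFin hIk).toEquiv _ _ (fun l => rfl)

lemma indep_card_le_rank (A : Elementary n k b) {I : Finset (Fin n)}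
    (hI : Indep b I) (h : Fin A.m) :
    (I.filter (fun j => ∃ h' ≤ h, j ∈ A.Jset h')).card
      ≤ ∑ h' ∈ Finset.univ.filter (fun h' => h' ≤ h), A.lam h' := by
  have hmem : ∀ j : (I.filter (fun j => ∃ h' ≤ h, j ∈ A.Jset h') : Finset (Fin n)),
      b j ∈ Submodule.span ℂ (b '' {j | ∃ h' ≤ h, j ∈ A.Jset h'}) := by
    intro j
    exact Submodule.subset_span ⟨(j : Fin n), (Finset.mem_filter.mp j.2).2, rfl⟩
  have hTI : LinearIndependent ℂ
      (fun j : (I.filter (fun j => ∃ h' ≤ h, j ∈ A.Jset h') : Finset (Fin n)) => b j) := by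
    have hinj : Function.Injective
        (fun j : (I.filter (fun j => ∃ h' ≤ h, j ∈ A.Jset h') : Finset (Fin n)) =>
          (⟨(j : Fin n), (Finset.mem_filter.mp j.2).1⟩ : I)) := by
      intro x y hxy
      exact Subtype.ext (by simpa using hxy)
    exact hI.comp (fun j : (I.filter (fun j => ∃ h' ≤ h, j ∈ A.Jset h') : Finset (Fin n)) =>
      (⟨(j : Fin n), (Finset.mem_filter.mp j.2).1⟩ : I)) hinj
  have hWind : LinearIndependent ℂ
      (fun j : (I.filter (fun j => ∃ h' ≤ h, j ∈ A.Jset h') : Finset (Fin n)) =>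
        (⟨b j, hmem j⟩ : Submodule.span ℂ (b '' {j | ∃ h' ≤ h, j ∈ A.Jset h'}))) :=
    LinearIndependent.of_comp (Submodule.span ℂ (b '' {j | ∃ h' ≤ h, j ∈ A.Jset h'})).subtype hTI
  have hcard := hWind.fintype_card_le_finrank
  rw [Fintype.card_coe] at hcard
  rw [← A.rank_eq h]
  exact hcard

lemma indep_card_lt_rank (A : Elementary n k b) {I : Finset (Fin n)}
    (hI : Indep b I) (h₀ : Fin A.m) :
    (I.filter (fun j => ∃ h' < h₀, j ∈ A.Jset h')).card
      ≤ ∑ h' ∈ Finset.univ.filter (fun h' => h' < h₀), A.lam h' := by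
  rcases Nat.eq_zero_or_pos h₀.val with h0 | h0
  · have hempty : I.filter (fun j => ∃ h' < h₀, j ∈ A.Jset h') = ∅ := by
      apply Finset.filter_false_of_mem
      rintro j - ⟨h', hh', -⟩
      have : (h' : ℕ) < (h₀ : ℕ) := hh'
      omega
    simp [hempty]
  · have hm : h₀.val - 1 < A.m := by have := h₀.isLt; omega
    have hiff : ∀ h' : Fin A.m, h' ≤ (⟨h₀.val - 1, hm⟩ : Fin A.m) ↔ h' < h₀ := by
      intro h'
      rw [Fin.le_def, Fin.lt_def]
      simp only []
      omega
    have e1 : I.filter (fun j => ∃ h' < h₀, j ∈ A.Jset h')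
        = I.filter (fun j => ∃ h' ≤ (⟨h₀.val - 1, hm⟩ : Fin A.m), j ∈ A.Jset h') :=
      Finset.filter_congr (fun j _ => by
        constructor
        · rintro ⟨h', hh', hmem⟩; exact ⟨h', (hiff h').mpr hh', hmem⟩
        · rintro ⟨h', hh', hmem⟩; exact ⟨h', (hiff h').mp hh', hmem⟩)
    have e2 : Finset.univ.filter (fun h' : Fin A.m => h' < h₀)
        = Finset.univ.filter (fun h' => h' ≤ (⟨h₀.val - 1, hm⟩ : Fin A.m)) :=
      Finset.filter_congr (fun h' _ => (hiff h').symm)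
    rw [e1, e2]
    exact indep_card_le_rank A hI ⟨h₀.val - 1, hm⟩
lemma degLe_fpol (A : Elementary n k b) (cC : Fin n → Fin k → ℂ)
    (eN : Fin A.m → Fin n → ℂ)
    (heN : ∀ h j, eN h j ≠ 0 → ∃ h' < h, j ∈ A.Jset h')
    (w : Fin n → ℕ) (D : ℕ) (h : Fin A.m)
    (hw : ∀ j, (∃ h' ≤ h, j ∈ A.Jset h') → w j ≤ D) :
    DegLe w (A.fpol cC eN h) D := by
  unfold Elementary.fpol
  apply degLe_add
  · apply degLe_sum
    intro i _
    have h1 : w (A.elt h i) ≤ D := hw _ ⟨h, le_refl h, A.elt_mem h i⟩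
    exact (degLe_mul (degLe_C w _) (degLe_X w _)).mono (by omega)
  · apply degLe_sum
    intro j _
    by_cases he : eN h j = 0
    · rw [he, map_zero, zero_mul]
      exact degLe_zero w D
    · obtain ⟨h', hh', hmem⟩ := heN h j he
      have h1 : w j ≤ D := hw _ ⟨h', le_of_lt hh', hmem⟩
      exact (degLe_mul (degLe_C w _) (degLe_X w _)).mono (by omega)

lemma degLe_prepot (A : Elementary n k b) (a : Fin n → ℂ) (cC : Fin n → Fin k → ℂ)
    (eN : Fin A.m → Fin n → ℂ)
    (heN : ∀ h j, eN h j ≠ 0 → ∃ h' < h, j ∈ A.Jset h')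
    (w : Fin n → ℕ) (D : Fin A.m → ℕ)
    (hw : ∀ h : Fin A.m, ∀ j, (∃ h' ≤ h, j ∈ A.Jset h') → w j ≤ D h) :
    DegLe w (A.prepot a cC eN) (∑ h, 2 * A.lam h * D h) := by
  unfold Elementary.prepot
  apply degLe_prod
  intro h _
  exact (degLe_mul (degLe_C w _)
    (degLe_pow (degLe_fpol A cC eN heN w (D h) h (hw h)) (2 * A.lam h))).mono
    (le_of_eq (zero_add _))

lemma main_key (A : Elementary n k b) (a : Fin n → ℂ)
    (cC : Fin n → Fin k → ℂ) (eN : Fin A.m → Fin n → ℂ)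
    (heN : ∀ h j, eN h j ≠ 0 → ∃ h' < h, j ∈ A.Jset h')
    (I L : Finset (Fin n)) (hIk : I.card = k) (hLk : L.card = k)
    (hIind : Indep b I) (hLind : Indep b L)
    (hbad : ¬ A.Distinguished I) :
    ∃ w : Fin n → ℕ, ∀ d ∈ (A.prepot a cC eN).support,
      wdeg w d < (∑ j ∈ I, w j) + ∑ j ∈ L, w j := by
  by_cases hsub : I ⊆ A.JLam
  case neg =>
    refine ⟨fun j => if j ∈ A.JLam then 0 else 1, ?_⟩
    intro d hd
    have hdeg : DegLe (fun j => if j ∈ A.JLam then 0 else 1) (A.prepot a cC eN)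
        (∑ h : Fin A.m, 2 * A.lam h * 0) := by
      apply degLe_prepot A a cC eN heN
      rintro h j ⟨h', -, hmem⟩
      have hjm : j ∈ A.JLam := Finset.mem_biUnion.mpr ⟨h', Finset.mem_univ _, hmem⟩
      simp [hjm]
    obtain ⟨j0, hj0I, hj0⟩ := Finset.not_subset.mp hsub
    have h1 : (1:ℕ) ≤ ∑ j ∈ I, (if j ∈ A.JLam then 0 else 1) := by
      have := Finset.single_le_sum (f := fun j => if j ∈ A.JLam then (0:ℕ) else 1)
        (fun _ _ => Nat.zero_le _) hj0I
      simpa [hj0] using this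
    have h2 := hdeg d hd
    simp only [mul_zero, Finset.sum_const_zero] at h2
    simp only []
    omega
  case pos =>
    have hdisj : ∀ h ∈ (Finset.univ : Finset (Fin A.m)), ∀ h' ∈ Finset.univ, h ≠ h' →
        Disjoint (I ∩ A.Jset h) (I ∩ A.Jset h') := by
      intro h _ h' _ hne
      exact (A.disj h h' hne).mono Finset.inter_subset_right Finset.inter_subset_right
    have hsumI : ∑ h : Fin A.m, (I ∩ A.Jset h).card = k := by
      have hI' : I = Finset.univ.biUnion (fun h => I ∩ A.Jset h) := by
        ext j
        simp only [Finset.mem_biUnion, Finset.mem_inter, Finset.mem_univ, true_and]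
        constructor
        · intro hj
          obtain ⟨h, -, hmem⟩ := Finset.mem_biUnion.mp (hsub hj)
          exact ⟨h, hj, hmem⟩
        · rintro ⟨h, hj, -⟩; exact hj
      rw [← Finset.card_biUnion hdisj, ← hI', hIk]
    obtain ⟨h₀, hh₀⟩ : ∃ h₀ : Fin A.m, A.lam h₀ + 1 ≤ (I ∩ A.Jset h₀).card := by
      by_contra hc
      push_neg at hc
      have hne : ∃ h, (I ∩ A.Jset h).card ≠ A.lam h := by
        by_contra hc2
        push_neg at hc2
        exact hbad ⟨hIk, hsub, hc2⟩
      obtain ⟨h1, hne1⟩ := hne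
      have hlt : ∑ h : Fin A.m, (I ∩ A.Jset h).card < ∑ h, A.lam h :=
        Finset.sum_lt_sum (fun h _ => by have := hc h; omega)
          ⟨h1, Finset.mem_univ _, by have := hc h1; omega⟩
      rw [hsumI, A.lam_sum] at hlt
      omega
    refine ⟨fun j => if ∃ h' < h₀, j ∈ A.Jset h' then 0 else 1, ?_⟩
    have hdeg : DegLe (fun j => if ∃ h' < h₀, j ∈ A.Jset h' then 0 else 1)
        (A.prepot a cC eN)
        (∑ h : Fin A.m, 2 * A.lam h * (if h < h₀ then 0 else 1)) := by
      apply degLe_prepot A a cC eN heN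
      rintro h j ⟨h', hh', hmem⟩
      by_cases hcase : h < h₀
      · have hq : ∃ h'' < h₀, j ∈ A.Jset h'' := ⟨h', lt_of_le_of_lt hh' hcase, hmem⟩
        simp [hq, hcase]
      · rw [if_neg hcase]
        split <;> omega
    have cnt : ∀ M : Finset (Fin n), M.card = k →
        (∑ j ∈ M, if ∃ h' < h₀, j ∈ A.Jset h' then (0:ℕ) else 1)
          + (M.filter (fun j => ∃ h' < h₀, j ∈ A.Jset h')).card = k := by
      intro M hM
      have e1 : ∑ j ∈ M, (if ∃ h' < h₀, j ∈ A.Jset h' then (0:ℕ) else 1)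
          = (M.filter (fun j => ¬ ∃ h' < h₀, j ∈ A.Jset h')).card := by
        rw [Finset.card_filter]
        apply Finset.sum_congr rfl
        intro j _
        by_cases hq : ∃ h' < h₀, j ∈ A.Jset h' <;> simp [hq]
      have h3 := Finset.card_filter_add_card_filter_not
        (s := M) (p := fun j => ∃ h' < h₀, j ∈ A.Jset h')
      omega
    have hdisj2 : Disjoint (I.filter (fun j => ∃ h' < h₀, j ∈ A.Jset h'))
        (I.filter (fun j => j ∈ A.Jset h₀)) := by
      rw [Finset.disjoint_left]
      intro j hj1 hj2
      obtain ⟨-, h', hh', hmem⟩ := Finset.mem_filter.mp hj1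
      have hj2' : j ∈ A.Jset h₀ := (Finset.mem_filter.mp hj2).2
      exact Finset.disjoint_left.mp (A.disj h' h₀ (ne_of_lt hh')) hmem hj2'
    have hsplit : (I.filter (fun j => ∃ h' ≤ h₀, j ∈ A.Jset h')).card
        = (I.filter (fun j => ∃ h' < h₀, j ∈ A.Jset h')).card + (I ∩ A.Jset h₀).card := by
      rw [← Finset.filter_mem_eq_inter, ← Finset.card_union_of_disjoint hdisj2]
      congr 1
      rw [← Finset.filter_or]
      apply Finset.filter_congr
      intro j _
      constructor
      · rintro ⟨h', hh', hmem⟩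
        rcases lt_or_eq_of_le hh' with hlt | heq
        · exact Or.inl ⟨h', hlt, hmem⟩
        · exact Or.inr (heq ▸ hmem)
      · rintro (⟨h', hh', hmem⟩ | hmem)
        · exact ⟨h', le_of_lt hh', hmem⟩
        · exact ⟨h₀, le_refl _, hmem⟩
    have hrankI := indep_card_le_rank A hIind h₀
    have hrankL := indep_card_lt_rank A hLind h₀
    have hsumsplit : ∑ h' ∈ Finset.univ.filter (fun h' => h' ≤ h₀), A.lam h'
        = (∑ h' ∈ Finset.univ.filter (fun h' => h' < h₀), A.lam h') + A.lam h₀ := by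
      have e : Finset.univ.filter (fun h' : Fin A.m => h' ≤ h₀)
          = insert h₀ (Finset.univ.filter (fun h' => h' < h₀)) := by
        ext h'
        simp only [Finset.mem_filter, Finset.mem_univ, true_and, Finset.mem_insert]
        rw [le_iff_lt_or_eq]
        tauto
      rw [e, Finset.sum_insert (by simp)]
      ring
    have htot : (∑ h' ∈ Finset.univ.filter (fun h' : Fin A.m => h' < h₀), A.lam h')
        + (∑ h' ∈ Finset.univ.filter (fun h' : Fin A.m => ¬ h' < h₀), A.lam h') = k := by
      rw [Finset.sum_filter_add_sum_filter_not]
      exact A.lam_sum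
    have hdsum : ∑ h : Fin A.m, 2 * A.lam h * (if h < h₀ then 0 else 1)
        = 2 * ∑ h' ∈ Finset.univ.filter (fun h' : Fin A.m => ¬ h' < h₀), A.lam h' := by
      rw [Finset.mul_sum, Finset.sum_filter]
      apply Finset.sum_congr rfl
      intro h _
      by_cases hc : h < h₀ <;> simp [hc]
    intro d hd
    have h2 := hdeg d hd
    rw [hdsum] at h2
    have hcntI := cnt I hIk
    have hcntL := cnt L hLk
    simp only []
    omega

end ArrPaper

open ArrPaper

/-- **Lemma 6.3 of the paper.** If `I` or `L` is not a distinguished element of the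
elementary subarrangement `(J_1,…,J_m)`, then the `2k`-th mixed partial derivative
`∂^{2k} P_{J_λ} / ∂z_{i_1} ⋯ ∂z_{i_k} ∂z_{l_1} ⋯ ∂z_{l_k}` of its prepotential of
first kind vanishes. -/
theorem stmt12 (n k : ℕ) (hk : 0 < k) (hkn : k < n)
    (b : Fin n → Fin k → ℂ) (hb0 : ∀ j, b j ≠ 0)
    (hbspan : Submodule.span ℂ (Set.range b) = ⊤)
    (a : Fin n → ℂ) (ha : ∀ j, a j ≠ 0)
    (A : Elementary n k b)
    (sB : Fin k → Fin k → ℂ) (cC : Fin n → Fin k → ℂ)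
    (eN : Fin A.m → Fin n → ℂ) (hch : A.ChoiceOK sB cC eN)
    (I L : Finset (Fin n)) (hIk : I.card = k) (hLk : L.card = k)
    (hIind : Indep b I) (hLind : Indep b L)
    (hnd : ¬ A.Distinguished I ∨ ¬ A.Distinguished L) :
    pderivList
        ((List.ofFn fun l : Fin k => (I.orderIsoOfFin hIk l).1)
          ++ (List.ofFn fun l : Fin k => (L.orderIsoOfFin hLk l).1))
        (A.prepot a cC eN)
      = 0 := by
  have heN := hch.2.2.2.1
  obtain ⟨w, hw⟩ : ∃ w : Fin n → ℕ, ∀ d ∈ (A.prepot a cC eN).support,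
      wdeg w d < (∑ j ∈ I, w j) + ∑ j ∈ L, w j := by
    rcases hnd with h | h
    · exact main_key A a cC eN heN I L hIk hLk hIind hLind h
    · obtain ⟨w, hw⟩ := main_key A a cC eN heN L I hLk hIk hLind hIind h
      exact ⟨w, fun d hd => by have := hw d hd; omega⟩
  apply pderivList_eq_zero_of_wdeg_lt w
  intro d hd
  rw [List.map_append, List.sum_append, sum_map_indicator hIk, sum_map_indicator hLk]
  exact hw d hd
end
end

section
/- Let (J_1,…,J_m) be an elementary subarrangement of type λ with prepotential of first kind P_{J_λ}, and let I and L be distinguished elements of (J_1,…,J_m). For each h let u_h (respectively s_h) be the position, in the increasing ordering of J_h, of the unique element of J_h ∖ I (respectively of J_h ∖ L). Let T_I = (i_1,…,i_k) (respectively T_L = (l_1,…,l_k)) be the ordered k-tuple obtained by concatenating the increasing lists of I ∩ J_1, …, I ∩ J_m (respectively of L ∩ J_1, …, L ∩ J_m). Then d_{T_I} · d_{T_L} · ∂^{2k} P_{J_λ} / ∂z_{i_1} ⋯ ∂z_{i_k} ∂z_{l_1} ⋯ ∂z_{l_k} = ( ∏_{h=1}^m (−1)^{u_h + s_h} ) ·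 ∏_{j∈J_λ} a_j (the iterated partial derivative being a constant, since P_{J_λ} is a polynomial of degree 2k). -/
open scoped BigOperators
open Classical

noncomputable section

open ArrPaper

namespace ArrPaper

open MvPolynomial Finset

variable {n k : ℕ}

/-! ### Basic lemmas on iterated partial derivatives -/

lemma pderivList_nil (p : MvPolynomial (Fin n) ℂ) : pderivList ([] : List (Fin n)) p = p := rfl

lemma pderivList_cons (r : Fin n) (L : List (Fin n)) (p : MvPolynomial (Fin n) ℂ) :
    pderivList (r :: L) p = pderivList L (MvPolynomial.pderiv r p) := rfl

lemma pderivList_append (L1 L2 : List (Fin n)) (p : MvPolynomial (Fin n) ℂ) :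
    pderivList (L1 ++ L2) p = pderivList L2 (pderivList L1 p) :=
  List.foldl_append ..

lemma pderivList_C_mul (c : ℂ) (L : List (Fin n)) (p : MvPolynomial (Fin n) ℂ) :
    pderivList L (C c * p) = C c * pderivList L p := by
  induction L generalizing p with
  | nil => rfl
  | cons r L ih => rw [pderivList_cons, pderivList_cons, pderiv_C_mul, ih]

lemma pderiv_pderiv_comm (i j : Fin n) (p : MvPolynomial (Fin n) ℂ) :
    MvPolynomial.pderiv i (MvPolynomial.pderiv j p)
      = MvPolynomial.pderiv j (MvPolynomial.pderiv i p) := by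
  by_cases hij : i = j
  · subst hij; rfl
  · induction p using MvPolynomial.induction_on' with
    | add p q hp hq => rw [map_add, map_add, hp, hq, map_add, map_add]
    | monomial s a =>
      rw [pderiv_monomial, pderiv_monomial, pderiv_monomial, pderiv_monomial]
      have h1 : s - Finsupp.single j 1 - Finsupp.single i 1
          = s - Finsupp.single i 1 - Finsupp.single j 1 := by
        ext t
        rw [Finsupp.tsub_apply, Finsupp.tsub_apply, Finsupp.tsub_apply, Finsupp.tsub_apply]
        simp only [Finsupp.single_apply]
        omega
      have h2 : (s - Finsupp.single j 1 : Fin n →₀ ℕ) i = s i := by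
        rw [Finsupp.tsub_apply, Finsupp.single_apply, if_neg (Ne.symm hij), Nat.sub_zero]
      have h3 : (s - Finsupp.single i 1 : Fin n →₀ ℕ) j = s j := by
        rw [Finsupp.tsub_apply, Finsupp.single_apply, if_neg hij, Nat.sub_zero]
      rw [h1, h2, h3, show a * (s j : ℂ) * (s i : ℂ) = a * (s i : ℂ) * (s j : ℂ) by ring]

instance : RightCommutative (fun (q : MvPolynomial (Fin n) ℂ) (r : Fin n) =>
    MvPolynomial.pderiv r q) :=
  ⟨fun q r r' => pderiv_pderiv_comm r' r q⟩

lemma pderivList_perm {L L' : List (Fin n)} (hp : L.Perm L') (p : MvPolynomial (Fin n) ℂ) :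
    pderivList L p = pderivList L' p :=
  hp.foldl_eq p

lemma pderiv_linear (φ : Fin n → ℂ) (r : Fin n) :
    MvPolynomial.pderiv r (∑ j, C (φ j) * X j) = C (φ r) := by
  rw [map_sum, Finset.sum_eq_single r]
  · rw [pderiv_C_mul, pderiv_X_self, mul_one]
  · intro j _ hj
    rw [pderiv_C_mul, pderiv_X_of_ne hj, mul_zero]
  · intro h; exact absurd (Finset.mem_univ r) h

lemma pderiv_mul_eq_zero {r : Fin n} {p q : MvPolynomial (Fin n) ℂ}
    (hp : MvPolynomial.pderiv r p = 0) (hq : MvPolynomial.pderiv r q = 0) :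
    MvPolynomial.pderiv r (p * q) = 0 := by
  rw [pderiv_mul, hp, hq, zero_mul, mul_zero, add_zero]

lemma pderiv_pow_eq_zero {r : Fin n} {p : MvPolynomial (Fin n) ℂ} (e : ℕ)
    (hp : MvPolynomial.pderiv r p = 0) :
    MvPolynomial.pderiv r (p ^ e) = 0 := by
  rw [pderiv_pow, hp, mul_zero]

/-- Lemma A: differentiating `q * f^(L.length)` along `L`, where `f` is the linear form with
coefficients `φ` and `q` is killed by all the derivatives. -/
lemma pderivList_mul_linear_pow (φ : Fin n → ℂ) (L : List (Fin n))
    (q : MvPolynomial (Fin n) ℂ) (hq : ∀ r ∈ L, MvPolynomial.pderiv r q = 0) :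
    pderivList L (q * (∑ j, C (φ j) * X j) ^ L.length)
      = C ((L.length.factorial : ℂ) * (L.map φ).prod) * q := by
  induction L with
  | nil => simp [pderivList_nil]
  | cons r L ih =>
    rw [pderivList_cons]
    have hfr : MvPolynomial.pderiv r
        (q * (∑ j, C (φ j) * X j) ^ (r :: L).length)
        = C (((L.length + 1 : ℕ) : ℂ) * φ r) * (q * (∑ j, C (φ j) * X j) ^ L.length) := by
      rw [pderiv_mul, hq r List.mem_cons_self, zero_mul, zero_add,
        pderiv_pow, pderiv_linear]
      simp only [List.length_cons, Nat.add_sub_cancel]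
      rw [show ((L.length + 1 : ℕ) : MvPolynomial (Fin n) ℂ)
          = C ((L.length + 1 : ℕ) : ℂ) from (map_natCast (C : ℂ →+* MvPolynomial (Fin n) ℂ) _).symm,
        C_mul]
      ring
    rw [hfr, pderivList_C_mul, ih (fun r' hr' => hq r' (List.mem_cons_of_mem _ hr')),
      ← mul_assoc, ← C_mul]
    congr 2
    rw [List.map_cons, List.prod_cons, List.length_cons, Nat.factorial_succ]
    push_cast
    ring

/-- Lemma B: differentiating a product of powers of linear forms along blocks of variables,
processed from the last block to the first. -/
lemma pderivList_prod_linear_pow :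
    ∀ (m : ℕ) (φ : Fin m → Fin n → ℂ) (Bl : Fin m → List (Fin n))
      (q : MvPolynomial (Fin n) ℂ),
      (∀ (h h' : Fin m), h < h' → ∀ r ∈ Bl h', φ h r = 0) →
      (∀ (h : Fin m), ∀ r ∈ Bl h, MvPolynomial.pderiv r q = 0) →
      pderivList ((List.finRange m).reverse.flatMap Bl)
          (q * ∏ h, (∑ j, C (φ h j) * X j) ^ (Bl h).length)
        = C (∏ h, (((Bl h).length.factorial : ℕ) : ℂ) * ((Bl h).map (φ h)).prod) * q := by
  intro m
  induction m with
  | zero =>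
    intro φ Bl q _ _
    simp [pderivList_nil]
  | succ m ih =>
    intro φ Bl q hsupp hq
    have hlist : (List.finRange (m + 1)).reverse.flatMap Bl
        = ((List.finRange m).reverse.flatMap fun h => Bl h.succ) ++ Bl 0 := by
      rw [List.finRange_succ, List.reverse_cons, List.flatMap_append, ← List.map_reverse,
        List.flatMap_map]
      simp
    have hprod : (∏ h, (∑ j, C (φ h j) * X j) ^ (Bl h).length)
        = (∑ j, C (φ 0 j) * X j) ^ (Bl 0).length
          * ∏ h : Fin m, (∑ j, C (φ h.succ j) * X j) ^ (Bl h.succ).length :=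
      Fin.prod_univ_succ _
    rw [hlist, pderivList_append, hprod,
      show q * ((∑ j, C (φ 0 j) * X j) ^ (Bl 0).length
          * ∏ h : Fin m, (∑ j, C (φ h.succ j) * X j) ^ (Bl h.succ).length)
        = (q * (∑ j, C (φ 0 j) * X j) ^ (Bl 0).length)
          * ∏ h : Fin m, (∑ j, C (φ h.succ j) * X j) ^ (Bl h.succ).length from by ring]
    rw [ih (fun h => φ h.succ) (fun h => Bl h.succ)
        (q * (∑ j, C (φ 0 j) * X j) ^ (Bl 0).length)
        (fun h h' hlt r hr => hsupp h.succ h'.succ (by simpa using hlt) r hr)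
        (fun h r hr => pderiv_mul_eq_zero (hq h.succ r hr)
          (pderiv_pow_eq_zero _ (by
            rw [pderiv_linear, hsupp 0 h.succ (Fin.succ_pos h) r hr, map_zero])))]
    rw [pderivList_C_mul, pderivList_mul_linear_pow (φ 0) (Bl 0) q (hq 0),
      Fin.prod_univ_succ (fun h => (((Bl h).length.factorial : ℕ) : ℂ) * ((Bl h).map (φ h)).prod),
      ← mul_assoc, ← C_mul]
    ring_nf

/-! ### Lemmas on `concatTuple` and `blockIdx` -/

lemma getElem_idx_congr {α : Type*} (l : List α) {i j : ℕ} (hij : i = j) (hj : j < l.length) :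
    l[i]'(hij ▸ hj) = l[j]'hj := by subst hij; rfl

lemma getElem_flatMap_sum {α β : Type*} (g : β → List α) :
    ∀ (l : List β) (t : ℕ) (ht : t < l.length) (r : ℕ) (hr : r < (g (l[t]'ht)).length)
      (hq : (((l.take t).map fun x => (g x).length).sum + r) < (l.flatMap g).length),
      (l.flatMap g)[((l.take t).map fun x => (g x).length).sum + r]'hq = (g (l[t]'ht))[r]'hr := by
  intro l
  induction l with
  | nil => intro t ht; simp at ht
  | cons x l ih =>
    intro t ht r hr hq
    match t with
    | 0 =>
      simp only [List.take_zero, List.map_nil, List.sum_nil, Nat.zero_add,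
        List.flatMap_cons] at hq ⊢
      exact List.getElem_append_left hr
    | (t + 1) =>
      simp only [List.take_succ_cons, List.map_cons, List.sum_cons, List.flatMap_cons,
        List.getElem_cons_succ] at hq ⊢
      have harr : (g x).length + ((l.take t).map fun y => (g y).length).sum + r
          = (g x).length + (((l.take t).map fun y => (g y).length).sum + r) := by omega
      rw [harr] at hq
      rw [getElem_idx_congr _ harr hq]
      rw [List.getElem_append_right (Nat.le_add_right _ _)]
      rw [getElem_idx_congr _ (show (g x).length + (((l.take t).map fun y => (g y).length).sum + r) - (g x).length = ((l.take t).map fun y => (g y).length).sum + r by omega) (by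
        simp only [List.length_append] at hq
        omega)]
      exact ih t (by simpa using ht) r hr _

lemma sum_take_finRange {m : ℕ} (g : Fin m → ℕ) :
    ∀ (t : ℕ), t ≤ m →
      (((List.finRange m).take t).map g).sum
        = ∑ h ∈ Finset.univ.filter (fun h : Fin m => (h : ℕ) < t), g h := by
  intro t
  induction t with
  | zero => intro _; simp
  | succ t ih =>
    intro ht
    have htm : t < m := ht
    rw [List.take_succ]
    have hfin : (List.finRange m)[t]? = some ⟨t, htm⟩ := by
      rw [List.getElem?_eq_getElem (by simpa using htm)]
      simp [List.getElem_finRange, Fin.ext_iff]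
    rw [hfin]
    simp only [Option.toList_some, List.map_append, List.sum_append, List.map_cons,
      List.map_nil, List.sum_cons, List.sum_nil, Nat.add_zero]
    rw [ih (le_of_lt htm)]
    have hins : Finset.univ.filter (fun h : Fin m => (h : ℕ) < t + 1)
        = insert (⟨t, htm⟩ : Fin m) (Finset.univ.filter fun h : Fin m => (h : ℕ) < t) := by
      ext x
      simp only [Finset.mem_filter, Finset.mem_univ, true_and, Finset.mem_insert, Fin.ext_iff]
      omega
    rw [hins, Finset.sum_insert (by simp)]
    omega

lemma concatTuple_blockIdx {α : Type*} {m k : ℕ} (lam : Fin m → ℕ) (hs : ∑ h, lam h = k)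
    (f : (h : Fin m) → Fin (lam h) → α) (h : Fin m) (r : Fin (lam h)) :
    concatTuple lam hs f (blockIdx lam hs h r) = f h r := by
  unfold concatTuple
  rw [List.get_eq_getElem]
  have hsum : ((Fin.cast (concatLen lam hs f).symm (blockIdx lam hs h r)) : ℕ)
      = (((List.finRange m).take (h : ℕ)).map
          fun x => (List.ofFn (f x)).length).sum + (r : ℕ) := by
    rw [Fin.coe_cast]
    show (∑ h' ∈ Finset.univ.filter (fun h' => h' < h), lam h') + (r : ℕ) = _
    rw [sum_take_finRange (fun x => (List.ofFn (f x)).length) (h : ℕ) (le_of_lt h.isLt)]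
    congr 1
    apply Finset.sum_congr
    · ext x
      simp only [Finset.mem_filter, Finset.mem_univ, true_and, Fin.lt_def]
    · intro x _
      simp
  have hlt2 : (((List.finRange m).take (h : ℕ)).map fun x => (List.ofFn (f x)).length).sum + (r : ℕ)
      < ((List.finRange m).flatMap fun h => List.ofFn (f h)).length := by
    rw [← hsum]
    exact (Fin.cast (concatLen lam hs f).symm (blockIdx lam hs h r)).isLt
  rw [getElem_idx_congr _ hsum hlt2]
  rw [getElem_flatMap_sum (fun x => List.ofFn (f x)) (List.finRange m) (h : ℕ)
    (by simpa using h.isLt) (r : ℕ) (by simpa using r.isLt)]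
  have hfin : ((List.finRange m)[(h : ℕ)]'(by simpa using h.isLt)) = h := by
    simp only [List.getElem_finRange]
    exact Fin.ext rfl
  rw [List.getElem_ofFn]
  have hgen : ∀ (X : Fin m) (hX : X = h) (rr : Fin (lam X)), (rr : ℕ) = (r : ℕ) → f X rr = f h r := by
    rintro X rfl rr hrr
    exact congrArg (f X) (Fin.ext hrr)
  exact hgen _ hfin _ rfl

lemma ofFn_concatTuple {α : Type*} {m k : ℕ} (lam : Fin m → ℕ) (hs : ∑ h, lam h = k)
    (f : (h : Fin m) → Fin (lam h) → α) :
    List.ofFn (concatTuple lam hs f) = (List.finRange m).flatMap fun h => List.ofFn (f h) := by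
  apply List.ext_getElem
  · simpa using (concatLen lam hs f).symm
  · intro i h1 h2
    rw [List.getElem_ofFn]
    rfl

lemma blockSum_le {m : ℕ} (lam : Fin m → ℕ) {h h' : Fin m} (hlt : h < h') :
    (∑ x ∈ Finset.univ.filter (fun x : Fin m => x < h), lam x) + lam h
      ≤ ∑ x ∈ Finset.univ.filter (fun x : Fin m => x < h'), lam x := by
  have hins : insert h (Finset.univ.filter fun x : Fin m => x < h)
      ⊆ Finset.univ.filter fun x : Fin m => x < h' := by
    intro x hx
    simp only [Finset.mem_insert, Finset.mem_filter, Finset.mem_univ, true_and] at hx ⊢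
    rcases hx with rfl | hx
    · exact hlt
    · exact lt_trans hx hlt
  calc (∑ x ∈ Finset.univ.filter (fun x : Fin m => x < h), lam x) + lam h
      = ∑ x ∈ insert h (Finset.univ.filter fun x : Fin m => x < h), lam x := by
        rw [Finset.sum_insert (by simp), Nat.add_comm]
    _ ≤ _ := Finset.sum_le_sum_of_subset hins

lemma blockIdx_bijective {m k : ℕ} (lam : Fin m → ℕ) (hs : ∑ h, lam h = k) :
    Function.Bijective (fun x : (Σ h : Fin m, Fin (lam h)) => blockIdx lam hs x.1 x.2) := by
  rw [Fintype.bijective_iff_injective_and_card]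
  constructor
  · rintro ⟨h, r⟩ ⟨h', r'⟩ heq
    have hv : (∑ x ∈ Finset.univ.filter (fun x => x < h), lam x) + (r : ℕ)
        = (∑ x ∈ Finset.univ.filter (fun x => x < h'), lam x) + (r' : ℕ) :=
      congrArg Fin.val heq
    have hhh : h = h' := by
      by_contra hne
      rcases lt_or_gt_of_ne hne with hlt | hlt
      · have h1 := blockSum_le lam hlt
        have h2 := r.isLt
        omega
      · have h1 := blockSum_le lam hlt
        have h2 := r'.isLt
        omega
    subst hhh
    have : r = r' := Fin.ext (by omega)
    rw [this]
  · simp [hs]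

/-- Determinant with columns grouped in blocks, block-triangular situation. -/
lemma det_concatTuple {m k : ℕ} (lam : Fin m → ℕ) (hs : ∑ h, lam h = k)
    (lampos : ∀ h, 0 < lam h)
    (g : (h : Fin m) → Fin (lam h) → Fin n) (cC : Fin n → Fin k → ℂ)
    (hvan : ∀ (x y : Fin m), y < x → ∀ (r' : Fin (lam y)) (r : Fin (lam x)),
      cC (g y r') (blockIdx lam hs x r) = 0) :
    Matrix.det (Matrix.of fun (i l : Fin k) => cC (concatTuple lam hs g l) i)
      = ∏ h, Matrix.det (Matrix.of fun (r l : Fin (lam h)) =>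
          cC (g h l) (blockIdx lam hs h r)) := by
  classical
  set e : (Σ h : Fin m, Fin (lam h)) ≃ Fin k :=
    Equiv.ofBijective _ (blockIdx_bijective lam hs) with he
  rw [← Matrix.det_submatrix_equiv_self e]
  set N := (Matrix.of fun (i l : Fin k) => cC (concatTuple lam hs g l) i).submatrix e e with hN
  have hNentry : ∀ (x y : Σ h : Fin m, Fin (lam h)),
      N x y = cC (g y.1 y.2) (blockIdx lam hs x.1 x.2) := by
    rintro ⟨h, r⟩ ⟨h', r'⟩
    show cC (concatTuple lam hs g (e ⟨h', r'⟩)) (e ⟨h, r⟩) = _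
    have h1 : e ⟨h', r'⟩ = blockIdx lam hs h' r' := rfl
    have h2 : e ⟨h, r⟩ = blockIdx lam hs h r := rfl
    rw [h1, h2, concatTuple_blockIdx]
  have hBT : N.BlockTriangular Sigma.fst := by
    rintro ⟨h, r⟩ ⟨h', r'⟩ hlt
    rw [hNentry]
    exact hvan h h' hlt r' r
  rw [hBT.det]
  have himage : Finset.univ.image (Sigma.fst : (Σ h : Fin m, Fin (lam h)) → Fin m)
      = Finset.univ := by
    apply Finset.eq_univ_of_forall
    intro h
    exact Finset.mem_image.mpr ⟨⟨h, ⟨0, lampos h⟩⟩, Finset.mem_univ _, rfl⟩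
  rw [himage]
  apply Finset.prod_congr rfl
  intro h _
  let eh : Fin (lam h) ≃ {x : Σ h' : Fin m, Fin (lam h') // x.1 = h} :=
    { toFun := fun r => ⟨⟨h, r⟩, rfl⟩
      invFun := fun x => Fin.cast (by rw [x.2]) x.1.2
      left_inv := fun r => rfl
      right_inv := fun x => by
        rcases x with ⟨⟨h', r⟩, hx⟩
        subst hx
        rfl }
  rw [← Matrix.det_submatrix_equiv_self eh]
  congr 1
  ext r l
  have h1 : ((eh r : {x : Σ h' : Fin m, Fin (lam h') // x.1 = h}) : Σ h' : Fin m, Fin (lam h'))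
      = ⟨h, r⟩ := rfl
  have h2 : ((eh l : {x : Σ h' : Fin m, Fin (lam h') // x.1 = h}) : Σ h' : Fin m, Fin (lam h'))
      = ⟨h, l⟩ := rfl
  simp only [Matrix.submatrix_apply, Matrix.toSquareBlock_def, Matrix.of_apply]
  rw [h1, h2, hNentry]

/-! ### Linear algebra lemmas -/

lemma sB_indep {sB : Fin k → Fin k → ℂ}
    (hdet : Matrix.det (Matrix.of fun (i l : Fin k) => sB l i) = 1) :
    ∀ (g : Fin k → ℂ), ∑ i, g i • sB i = 0 → g = 0 := by
  intro g hg
  by_contra hne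
  have hmv : (Matrix.of fun (i l : Fin k) => sB l i).mulVec g = 0 := by
    ext r
    have h0 := congrFun hg r
    simp only [Finset.sum_apply, Pi.smul_apply, smul_eq_mul, Pi.zero_apply] at h0
    simpa [Matrix.mulVec, dotProduct, mul_comm] using h0
  have hdet0 : (Matrix.of fun (i l : Fin k) => sB l i).det = 0 :=
    Matrix.exists_mulVec_eq_zero_iff.mp ⟨g, hne, hmv⟩
  rw [hdet] at hdet0
  exact one_ne_zero hdet0

lemma coeff_eq_of_sum_eq {sB : Fin k → Fin k → ℂ}
    (hind : ∀ (g : Fin k → ℂ), ∑ i, g i • sB i = 0 → g = 0)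
    {c d : Fin k → ℂ} (h : ∑ i, c i • sB i = ∑ i, d i • sB i) : c = d := by
  have h0 : ∑ i, (c i - d i) • sB i = 0 := by
    simp only [sub_smul, Finset.sum_sub_distrib, h, sub_self]
  have h1 := hind _ h0
  funext i
  have := congrFun h1 i
  simpa [sub_eq_zero] using this

variable {b : Fin n → Fin k → ℂ}

lemma Elementary.sum_filter_le_eq (A : Elementary n k b) (h : Fin A.m) :
    ∑ x ∈ Finset.univ.filter (fun x => x ≤ h), A.lam x
      = (∑ x ∈ Finset.univ.filter (fun x => x < h), A.lam x) + A.lam h := by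
  have hins : Finset.univ.filter (fun x : Fin A.m => x ≤ h)
      = insert h (Finset.univ.filter fun x : Fin A.m => x < h) := by
    ext x
    simp only [Finset.mem_filter, Finset.mem_univ, true_and, Finset.mem_insert,
      Fin.le_def, Fin.lt_def, Fin.ext_iff]
    omega
  rw [hins, Finset.sum_insert (by simp), Nat.add_comm]

lemma Elementary.coord_vanish (A : Elementary n k b) {sB : Fin k → Fin k → ℂ}
    {cC : Fin n → Fin k → ℂ} {eN : Fin A.m → Fin n → ℂ} (hch : A.ChoiceOK sB cC eN)
    {h' : Fin A.m} {j : Fin n} (hj : j ∈ A.Jset h') {i : Fin k}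
    (hi : (∑ x ∈ Finset.univ.filter (fun x => x ≤ h'), A.lam x) ≤ (i : ℕ)) :
    cC j i = 0 := by
  obtain ⟨hdet, hrep, hspan, heN, hrel⟩ := hch
  set c := ∑ x ∈ Finset.univ.filter (fun x : Fin A.m => x ≤ h'), A.lam x with hc
  have hbj : b j ∈ A.Xstar h' := Submodule.subset_span ⟨j, ⟨h', le_refl h', hj⟩, rfl⟩
  rw [← hspan h'] at hbj
  have hset : {v : Fin k → ℂ | ∃ i : Fin k, (i : ℕ) < c ∧ v = sB i}
      = sB '' {i : Fin k | (i : ℕ) < c} := by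
    ext v
    constructor
    · rintro ⟨i, hi, rfl⟩; exact ⟨i, hi, rfl⟩
    · rintro ⟨i, hi, rfl⟩; exact ⟨i, hi, rfl⟩
  rw [hset] at hbj
  obtain ⟨l, hlsupp, hlval⟩ := (Finsupp.mem_span_image_iff_linearCombination ℂ).mp hbj
  have hsum : ∑ i, l i • sB i = b j := by
    rw [← hlval, Finsupp.linearCombination_apply, Finsupp.sum_fintype]
    intro i; rw [zero_smul]
  have hcd : cC j = fun i => l i :=
    coeff_eq_of_sum_eq (sB_indep hdet) (by rw [hsum, ← hrep j])
  have hli : l i = 0 := by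
    by_contra hne
    have : i ∈ l.support := Finsupp.mem_support_iff.mpr hne
    have := Finsupp.mem_supported ℂ l |>.mp hlsupp this
    simp only [Set.mem_setOf_eq] at this
    omega
  rw [congrFun hcd i, hli]

lemma Elementary.span_sB_lt (A : Elementary n k b) {sB : Fin k → Fin k → ℂ}
    {cC : Fin n → Fin k → ℂ} {eN : Fin A.m → Fin n → ℂ} (hch : A.ChoiceOK sB cC eN)
    (h : Fin A.m) :
    Submodule.span ℂ {v : Fin k → ℂ | ∃ i : Fin k,
        (i : ℕ) < (∑ x ∈ Finset.univ.filter (fun x => x < h), A.lam x) ∧ v = sB i}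
      ≤ Submodule.span ℂ (b '' {j | ∃ h' < h, j ∈ A.Jset h'}) := by
  rcases Nat.eq_zero_or_pos h.val with h0 | hpos
  · have hempty : {v : Fin k → ℂ | ∃ i : Fin k,
        (i : ℕ) < (∑ x ∈ Finset.univ.filter (fun x : Fin A.m => x < h), A.lam x) ∧ v = sB i}
        = ∅ := by
      have hf : Finset.univ.filter (fun x : Fin A.m => x < h) = ∅ := by
        ext x
        simp only [Finset.mem_filter, Finset.mem_univ, true_and, Finset.notMem_empty,
          iff_false, Fin.lt_def]
        omega
      rw [hf]
      simp
    rw [hempty]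
    simp
  · set hp : Fin A.m := ⟨h.val - 1, by omega⟩ with hhp
    have h1 : ∀ x : Fin A.m, (x < h) ↔ (x ≤ hp) := by
      intro x
      rw [Fin.lt_def, Fin.le_def]
      simp only [hhp]
      omega
    have hfil : Finset.univ.filter (fun x : Fin A.m => x < h)
        = Finset.univ.filter (fun x => x ≤ hp) := by
      ext x
      simp only [Finset.mem_filter, Finset.mem_univ, true_and, h1 x]
    have hsetJ : {j : Fin n | ∃ h' < h, j ∈ A.Jset h'} = {j | ∃ h' ≤ hp, j ∈ A.Jset h'} := by
      ext j
      constructor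
      · rintro ⟨h', hlt, hmem⟩; exact ⟨h', (h1 h').1 hlt, hmem⟩
      · rintro ⟨h', hle, hmem⟩; exact ⟨h', (h1 h').2 hle, hmem⟩
    rw [hfil, hsetJ]
    rw [hch.2.2.1 hp]
    exact le_of_eq rfl

lemma Elementary.finrank_span_lt (A : Elementary n k b) (h : Fin A.m) :
    Module.finrank ℂ (Submodule.span ℂ (b '' {j | ∃ h' < h, j ∈ A.Jset h'}))
      = ∑ x ∈ Finset.univ.filter (fun x => x < h), A.lam x := by
  rcases Nat.eq_zero_or_pos h.val with h0 | hpos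
  · have hJ : {j : Fin n | ∃ h' < h, j ∈ A.Jset h'} = ∅ := by
      ext j
      simp only [Set.mem_setOf_eq, Set.mem_empty_iff_false, iff_false, not_exists]
      intro h' hlt
      exact absurd hlt (by rw [Fin.lt_def]; omega)
    have hf : Finset.univ.filter (fun x : Fin A.m => x < h) = ∅ := by
      ext x
      simp only [Finset.mem_filter, Finset.mem_univ, true_and, Finset.notMem_empty,
        iff_false, Fin.lt_def]
      omega
    rw [hJ, hf]
    simp
  · set hp : Fin A.m := ⟨h.val - 1, by omega⟩ with hhp
    have h1 : ∀ x : Fin A.m, (x < h) ↔ (x ≤ hp) := by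
      intro x
      rw [Fin.lt_def, Fin.le_def]
      simp only [hhp]
      omega
    have hfil : Finset.univ.filter (fun x : Fin A.m => x < h)
        = Finset.univ.filter (fun x => x ≤ hp) := by
      ext x
      simp only [Finset.mem_filter, Finset.mem_univ, true_and, h1 x]
    have hsetJ : {j : Fin n | ∃ h' < h, j ∈ A.Jset h'} = {j | ∃ h' ≤ hp, j ∈ A.Jset h'} := by
      ext j
      constructor
      · rintro ⟨h', hlt, hmem⟩; exact ⟨h', (h1 h').1 hlt, hmem⟩
      · rintro ⟨h', hle, hmem⟩; exact ⟨h', (h1 h').2 hle, hmem⟩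
    rw [hfil, hsetJ]
    exact A.rank_eq hp

lemma Elementary.elt_injective (A : Elementary n k b) (h : Fin A.m) :
    Function.Injective (A.elt h) := fun i j hij =>
  (A.Jset h).orderIsoOfFin (A.card_eq h) |>.injective (Subtype.ext hij)

lemma Elementary.omit_mem_erase (A : Elementary n k b) (h : Fin A.m)
    (i : Fin (A.lam h + 1)) (l : Fin (A.lam h)) :
    A.omit h i l ∈ (A.Jset h).erase (A.elt h i) :=
  (((A.Jset h).erase (A.elt h i)).orderIsoOfFin (A.card_erase h i) l).2

lemma Elementary.omit_mem (A : Elementary n k b) (h : Fin A.m)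
    (i : Fin (A.lam h + 1)) (l : Fin (A.lam h)) :
    A.omit h i l ∈ A.Jset h :=
  Finset.mem_of_mem_erase (A.omit_mem_erase h i l)

lemma Elementary.omit_ne (A : Elementary n k b) (h : Fin A.m)
    (i : Fin (A.lam h + 1)) (l : Fin (A.lam h)) :
    A.omit h i l ≠ A.elt h i :=
  Finset.ne_of_mem_erase (A.omit_mem_erase h i l)

lemma Elementary.omit_injective (A : Elementary n k b) (h : Fin A.m)
    (i : Fin (A.lam h + 1)) :
    Function.Injective (A.omit h i) := fun l l' hll =>
  ((A.Jset h).erase (A.elt h i)).orderIsoOfFin (A.card_erase h i) |>.injective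
    (Subtype.ext hll)

/-- Nonvanishing of the block determinants `D_{i,h}`. -/
lemma Elementary.DD_ne_zero (A : Elementary n k b) {sB : Fin k → Fin k → ℂ}
    {cC : Fin n → Fin k → ℂ} {eN : Fin A.m → Fin n → ℂ} (hch : A.ChoiceOK sB cC eN)
    (h : Fin A.m) (i : Fin (A.lam h + 1)) : A.DD cC h i ≠ 0 := by
  intro hdet
  rw [Elementary.DD] at hdet
  obtain ⟨x, hx0, hxv⟩ := Matrix.exists_mulVec_eq_zero_iff.mpr hdet
  set Slt := ∑ x ∈ Finset.univ.filter (fun x : Fin A.m => x < h), A.lam x with hSlt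
  set Sle := ∑ x ∈ Finset.univ.filter (fun x : Fin A.m => x ≤ h), A.lam x with hSle
  have hS : Sle = Slt + A.lam h := A.sum_filter_le_eq h
  set v : Fin k → ℂ := ∑ l, x l • b (A.omit h i l) with hvdef
  set cv : Fin k → ℂ := fun i' => ∑ l, x l * cC (A.omit h i l) i' with hcv
  have hv : v = ∑ i', cv i' • sB i' := by
    rw [hvdef]
    calc ∑ l, x l • b (A.omit h i l)
        = ∑ l, ∑ i', (x l * cC (A.omit h i l) i') • sB i' := by
          apply Finset.sum_congr rfl
          intro l _
          rw [hch.2.1 (A.omit h i l), Finset.smul_sum]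
          apply Finset.sum_congr rfl
          intro i' _
          rw [smul_smul]
      _ = ∑ i', ∑ l, (x l * cC (A.omit h i l) i') • sB i' := Finset.sum_comm
      _ = ∑ i', cv i' • sB i' := by
          apply Finset.sum_congr rfl
          intro i' _
          rw [hcv, ← Finset.sum_smul]
  have hcv0 : ∀ i' : Fin k, Slt ≤ (i' : ℕ) → cv i' = 0 := by
    intro i' hi'
    rcases le_or_gt Sle (i' : ℕ) with hge | hlt
    · rw [hcv]
      apply Finset.sum_eq_zero
      intro l _
      rw [A.coord_vanish hch (A.omit_mem h i l) hge, mul_zero]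
    · set r : Fin (A.lam h) := ⟨(i' : ℕ) - Slt, by omega⟩ with hr
      have hbi : blockIdx A.lam A.lam_sum h r = i' := by
        apply Fin.ext
        show Slt + ((i' : ℕ) - Slt) = (i' : ℕ)
        omega
      have hrow := congrFun hxv r
      simp only [Matrix.mulVec, dotProduct, Matrix.of_apply, Pi.zero_apply] at hrow
      rw [hcv, ← hbi]
      rw [← hrow]
      apply Finset.sum_congr rfl
      intro l _
      ring
  have hvmem : v ∈ Submodule.span ℂ (b '' {j | ∃ h' < h, j ∈ A.Jset h'}) := by
    apply A.span_sB_lt hch h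
    rw [hv]
    rw [← Finset.sum_subset (Finset.subset_univ
      (Finset.univ.filter fun i' : Fin k => (i' : ℕ) < Slt))
      (fun i' _ hni' => by
        rw [hcv0 i' (by simpa using hni'), zero_smul])]
    apply Submodule.sum_mem
    intro i' hi'
    apply Submodule.smul_mem
    apply Submodule.subset_span
    exact ⟨i', by simpa using hi', rfl⟩
  obtain ⟨l0, hxl0⟩ := Function.ne_iff.mp hx0
  rw [Pi.zero_apply] at hxl0
  set P := Submodule.span ℂ
    (b '' (({j | ∃ h' ≤ h, j ∈ A.Jset h'} \ {A.elt h i}) \ {A.omit h i l0})) with hP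
  have hWP : Submodule.span ℂ (b '' {j | ∃ h' < h, j ∈ A.Jset h'}) ≤ P := by
    apply Submodule.span_mono
    apply Set.image_mono
    rintro j ⟨h', hlt, hmem⟩
    have hne : ∀ jj, jj ∈ A.Jset h → j ≠ jj := by
      intro jj hjj hj
      subst hj
      exact Finset.disjoint_left.mp (A.disj h' h (ne_of_lt hlt)) hmem hjj
    exact ⟨⟨⟨h', le_of_lt hlt, hmem⟩, hne _ (A.elt_mem h i)⟩, hne _ (A.omit_mem h i l0)⟩
  have hother : ∀ l, l ≠ l0 → b (A.omit h i l) ∈ P := by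
    intro l hl
    apply Submodule.subset_span
    refine ⟨A.omit h i l, ⟨⟨⟨h, le_refl h, A.omit_mem h i l⟩, A.omit_ne h i l⟩, ?_⟩, rfl⟩
    simp only [Set.mem_singleton_iff]
    exact fun hc => hl (A.omit_injective h i hc)
  have hbj0 : b (A.omit h i l0) ∈ P := by
    have hxeq : x l0 • b (A.omit h i l0)
        = v - ∑ l ∈ Finset.univ.erase l0, x l • b (A.omit h i l) := by
      rw [hvdef, eq_sub_iff_add_eq, add_comm]
      exact Finset.sum_erase_add _ _ (Finset.mem_univ l0)
    have hb0 : b (A.omit h i l0)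
        = (x l0)⁻¹ • (v - ∑ l ∈ Finset.univ.erase l0, x l • b (A.omit h i l)) := by
      rw [← hxeq, inv_smul_smul₀ hxl0]
    rw [hb0]
    apply Submodule.smul_mem
    apply Submodule.sub_mem
    · exact hWP hvmem
    · apply Submodule.sum_mem
      intro l hl
      exact Submodule.smul_mem _ _ (hother l (Finset.ne_of_mem_erase hl))
  have hspanle : Submodule.span ℂ (b '' ({j | ∃ h' ≤ h, j ∈ A.Jset h'} \ {A.elt h i})) ≤ P := by
    rw [Submodule.span_le]
    rintro w ⟨j, ⟨hjG, hjne⟩, rfl⟩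
    by_cases hj0 : j = A.omit h i l0
    · subst hj0
      exact hbj0
    · exact Submodule.subset_span ⟨j, ⟨⟨hjG, hjne⟩, hj0⟩, rfl⟩
  -- the rank bound
  set F : Finset (Fin n) := ((A.Jset h).erase (A.elt h i)).erase (A.omit h i l0) with hF
  have hPle : P ≤ Submodule.span ℂ (b '' {j | ∃ h' < h, j ∈ A.Jset h'})
      ⊔ Submodule.span ℂ (b '' ↑F) := by
    rw [hP, ← Submodule.span_union, ← Set.image_union]
    apply Submodule.span_mono
    apply Set.image_mono
    rintro j ⟨⟨⟨h', hle, hmem⟩, hne1⟩, hne2⟩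
    by_cases hh : h' = h
    · subst hh
      right
      rw [hF]
      simp only [Finset.coe_erase, Set.mem_diff, Set.mem_singleton_iff]
      exact ⟨⟨hmem, fun hc => hne1 (by simpa using hc)⟩, fun hc => hne2 (by simpa using hc)⟩
    · left
      exact ⟨h', lt_of_le_of_ne hle hh, hmem⟩
  have hrkF : Module.finrank ℂ (Submodule.span ℂ (b '' ↑F)) ≤ A.lam h - 1 := by
    have h1 : (b '' ↑F) = ↑(F.image b) := (Finset.coe_image).symm
    rw [h1]
    refine le_trans (finrank_span_finset_le_card (F.image b)) ?_
    refine le_trans (Finset.card_image_le) ?_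
    rw [hF, Finset.card_erase_of_mem (A.omit_mem_erase h i l0), A.card_erase h i]
  have hrkP : Module.finrank ℂ P ≤ Slt + (A.lam h - 1) := by
    refine le_trans (Submodule.finrank_mono hPle) ?_
    refine le_trans (Submodule.finrank_add_le_finrank_add_finrank _ _) ?_
    rw [A.finrank_span_lt h]
    exact Nat.add_le_add (le_refl _) hrkF
  have hrkK : Module.finrank ℂ
      (Submodule.span ℂ (b '' ({j | ∃ h' ≤ h, j ∈ A.Jset h'} \ {A.elt h i}))) = Sle :=
    A.rank_erase h (A.elt h i) (A.elt_mem h i)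
  have hchain : Sle ≤ Slt + (A.lam h - 1) := by
    rw [← hrkK]
    exact le_trans (Submodule.finrank_mono hspanle) hrkP
  have := A.lam_pos h
  omega


/-! ### Miscellaneous helpers for the main theorem -/

lemma orderIsoOfFin_congr {α : Type*} [LinearOrder α] {s t : Finset α} (hst : s = t)
    {c : ℕ} (hs : s.card = c) (ht : t.card = c) (i : Fin c) :
    ((s.orderIsoOfFin hs i : α)) = (t.orderIsoOfFin ht i : α) := by
  subst hst; rfl

lemma prod_orderIsoOfFin {α : Type*} [LinearOrder α] (s : Finset α) {c : ℕ}
    (hc : s.card = c) (F : α → ℂ) :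
    ∏ l : Fin c, F ((s.orderIsoOfFin hc l : α)) = ∏ j ∈ s, F j := by
  rw [← Finset.prod_coe_sort s F]
  exact Fintype.prod_equiv (s.orderIsoOfFin hc).toEquiv _ _ (fun l => rfl)

lemma Elementary.image_elt (A : Elementary n k b) (h : Fin A.m) :
    Finset.univ.image (A.elt h) = A.Jset h := by
  ext x
  simp only [Finset.mem_image, Finset.mem_univ, true_and]
  constructor
  · rintro ⟨i, rfl⟩
    exact A.elt_mem h i
  · intro hx
    refine ⟨((A.Jset h).orderIsoOfFin (A.card_eq h)).symm ⟨x, hx⟩, ?_⟩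
    show ((((A.Jset h).orderIsoOfFin (A.card_eq h))
      (((A.Jset h).orderIsoOfFin (A.card_eq h)).symm ⟨x, hx⟩) : Fin n)) = x
    rw [OrderIso.apply_symm_apply]

lemma Elementary.prod_erase_elt (A : Elementary n k b) (h : Fin A.m)
    (t : Fin (A.lam h + 1)) (F : Fin n → ℂ) :
    ∏ j ∈ (A.Jset h).erase (A.elt h t), F j
      = ∏ i ∈ Finset.univ.erase t, F (A.elt h i) := by
  have himg : (Finset.univ.erase t).image (A.elt h) = (A.Jset h).erase (A.elt h t) := by
    rw [Finset.image_erase (A.elt_injective h), A.image_elt h]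
  rw [← himg, Finset.prod_image (fun i _ j _ hij => A.elt_injective h hij)]

/-- The per-block scalar identity. -/
lemma scalar_block {lm : ℕ} (D : Fin (lm + 1) → ℂ) (hD : ∀ i, D i ≠ 0)
    (u s : Fin (lm + 1)) (Pa : ℂ) (N : ℕ) :
    (D u * D s) * ((Pa * ((N.factorial : ℂ) * (∏ i, D i) ^ 2)⁻¹)
      * ((N.factorial : ℂ) * ((∏ i ∈ Finset.univ.erase u, ((-1 : ℂ) ^ (i : ℕ) * D i))
          * (∏ i ∈ Finset.univ.erase s, ((-1 : ℂ) ^ (i : ℕ) * D i)))))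
      = (-1 : ℂ) ^ ((u : ℕ) + (s : ℕ)) * Pa := by
  have hP : (∏ i, D i) ≠ 0 := Finset.prod_ne_zero_iff.mpr fun i _ => hD i
  have hN : (N.factorial : ℂ) ≠ 0 := Nat.cast_ne_zero.mpr (Nat.factorial_ne_zero N)
  set E : ℂ := ∏ i : Fin (lm + 1), (-1 : ℂ) ^ (i : ℕ) with hE
  have hEE : E * E = 1 := by
    rw [hE, ← Finset.prod_mul_distrib,
      Finset.prod_congr rfl (fun (i : Fin (lm + 1)) (_ : i ∈ Finset.univ) =>
        show (-1 : ℂ) ^ (i : ℕ) * (-1 : ℂ) ^ (i : ℕ) = 1 by rw [← mul_pow]; norm_num)]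
    exact Finset.prod_const_one
  have key : ∀ t : Fin (lm + 1),
      D t * ∏ i ∈ Finset.univ.erase t, ((-1 : ℂ) ^ (i : ℕ) * D i)
        = (-1 : ℂ) ^ (t : ℕ) * (E * ∏ i, D i) := by
    intro t
    have hsq : (-1 : ℂ) ^ (t : ℕ) * (-1 : ℂ) ^ (t : ℕ) = 1 := by
      rw [← mul_pow]; norm_num
    have hglob : ∏ i : Fin (lm + 1), ((-1 : ℂ) ^ (i : ℕ) * D i) = E * ∏ i, D i := by
      rw [hE]
      exact Finset.prod_mul_distrib
    have hk : ((-1 : ℂ) ^ (t : ℕ) * D t)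
        * ∏ i ∈ Finset.univ.erase t, ((-1 : ℂ) ^ (i : ℕ) * D i)
        = ∏ i : Fin (lm + 1), ((-1 : ℂ) ^ (i : ℕ) * D i) :=
      Finset.mul_prod_erase Finset.univ (fun i : Fin (lm + 1) => (-1 : ℂ) ^ (i : ℕ) * D i) (Finset.mem_univ t)
    calc D t * ∏ i ∈ Finset.univ.erase t, ((-1 : ℂ) ^ (i : ℕ) * D i)
        = ((-1 : ℂ) ^ (t : ℕ) * (-1 : ℂ) ^ (t : ℕ))
          * (D t * ∏ i ∈ Finset.univ.erase t, ((-1 : ℂ) ^ (i : ℕ) * D i)) := by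
          rw [hsq, one_mul]
      _ = (-1 : ℂ) ^ (t : ℕ) * (((-1 : ℂ) ^ (t : ℕ) * D t)
          * ∏ i ∈ Finset.univ.erase t, ((-1 : ℂ) ^ (i : ℕ) * D i)) := by ring
      _ = (-1 : ℂ) ^ (t : ℕ) * (E * ∏ i, D i) := by rw [hk, hglob]
  calc (D u * D s) * ((Pa * ((N.factorial : ℂ) * (∏ i, D i) ^ 2)⁻¹)
      * ((N.factorial : ℂ) * ((∏ i ∈ Finset.univ.erase u, ((-1 : ℂ) ^ (i : ℕ) * D i))
          * (∏ i ∈ Finset.univ.erase s, ((-1 : ℂ) ^ (i : ℕ) * D i)))))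
      = (D u * ∏ i ∈ Finset.univ.erase u, ((-1 : ℂ) ^ (i : ℕ) * D i))
        * (D s * ∏ i ∈ Finset.univ.erase s, ((-1 : ℂ) ^ (i : ℕ) * D i))
        * Pa * (((N.factorial : ℂ) * (∏ i, D i) ^ 2)⁻¹ * (N.factorial : ℂ)) := by ring
    _ = ((-1 : ℂ) ^ (u : ℕ) * (E * ∏ i, D i)) * ((-1 : ℂ) ^ (s : ℕ) * (E * ∏ i, D i))
        * Pa * (((N.factorial : ℂ) * (∏ i, D i) ^ 2)⁻¹ * (N.factorial : ℂ)) := by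
        rw [key u, key s]
    _ = ((-1 : ℂ) ^ (u : ℕ) * (-1 : ℂ) ^ (s : ℕ)) * (E * E) * Pa
        * (((N.factorial : ℂ) * (∏ i, D i) ^ 2) * ((N.factorial : ℂ) * (∏ i, D i) ^ 2)⁻¹) := by
        ring
    _ = (-1 : ℂ) ^ ((u : ℕ) + (s : ℕ)) * Pa := by
        rw [hEE, mul_inv_cancel₀ (mul_ne_zero hN (pow_ne_zero 2 hP)), pow_add]
        ring


end ArrPaper


/-- **Formula (6.4) of the paper.** For distinguished elements `I`, `L` of an
elementary subarrangement `(J_1,…,J_m)`, the `2k`-th mixed partial derivative of the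
prepotential of first kind along `T_I` and `T_L` satisfies
`d_{T_I} d_{T_L} ∂^{2k} P_{J_λ} = (∏_h (−1)^{u_h+s_h}) ∏_{j∈J_λ} a_j`. -/
theorem stmt13 (n k : ℕ) (hk : 0 < k) (hkn : k < n)
    (b : Fin n → Fin k → ℂ) (hb0 : ∀ j, b j ≠ 0)
    (hbspan : Submodule.span ℂ (Set.range b) = ⊤)
    (a : Fin n → ℂ) (ha : ∀ j, a j ≠ 0)
    (A : Elementary n k b)
    (sB : Fin k → Fin k → ℂ) (cC : Fin n → Fin k → ℂ)
    (eN : Fin A.m → Fin n → ℂ) (hch : A.ChoiceOK sB cC eN)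
    (I L : Finset (Fin n))
    (hI : A.Distinguished I) (hL : A.Distinguished L)
    (hIc : ∀ h, (I ∩ A.Jset h).card = A.lam h)
    (hLc : ∀ h, (L ∩ A.Jset h).card = A.lam h)
    -- `u h`, `s h`: positions (in the increasing ordering of `J_h`) of the unique
    -- elements of `J_h ∖ I` and `J_h ∖ L`
    (u s : (h : Fin A.m) → Fin (A.lam h + 1))
    (hu : ∀ h, A.Jset h \ I = {A.elt h (u h)})
    (hs : ∀ h, A.Jset h \ L = {A.elt h (s h)}) :
    MvPolynomial.C (dtup b (A.concatI I hIc) * dtup b (A.concatI L hLc)) *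
        pderivList
          (List.ofFn (A.concatI I hIc) ++ List.ofFn (A.concatI L hLc))
          (A.prepot a cC eN)
      = MvPolynomial.C
          ((∏ h, (-1 : ℂ) ^ ((u h : ℕ) + (s h : ℕ))) * ∏ j ∈ A.JLam, a j) := by
  classical
  -- weight functions for the linear forms
  set φ : Fin A.m → Fin n → ℂ :=
    fun h j => eN h j + ∑ i, if A.elt h i = j then (-1 : ℂ) ^ (i : ℕ) * A.DD cC h i else 0
    with hφ
  set BlI : Fin A.m → List (Fin n) :=
    fun h => List.ofFn (fun l => ((I ∩ A.Jset h).orderIsoOfFin (hIc h) l).1) with hBlI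
  set BlL : Fin A.m → List (Fin n) :=
    fun h => List.ofFn (fun l => ((L ∩ A.Jset h).orderIsoOfFin (hLc h) l).1) with hBlL
  set Bl : Fin A.m → List (Fin n) := fun h => BlI h ++ BlL h with hBl
  have heN0 : ∀ (h : Fin A.m) (j : Fin n), j ∈ A.Jset h → eN h j = 0 := by
    intro h j hj
    by_contra hne
    obtain ⟨h', hlt, hmem⟩ := hch.2.2.2.1 h j hne
    exact Finset.disjoint_left.mp (A.disj h' h (ne_of_lt hlt)) hmem hj
  have hphi_elt : ∀ (h : Fin A.m) (i : Fin (A.lam h + 1)),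
      φ h (A.elt h i) = (-1 : ℂ) ^ (i : ℕ) * A.DD cC h i := by
    intro h i
    simp only [hφ]
    rw [heN0 h _ (A.elt_mem h i), zero_add, Finset.sum_eq_single i]
    · rw [if_pos rfl]
    · intro i' _ hne
      rw [if_neg (fun hc => hne (A.elt_injective h hc))]
    · intro hc
      exact absurd (Finset.mem_univ i) hc
  have hphi_out : ∀ (h h' : Fin A.m), h < h' → ∀ r ∈ A.Jset h', φ h r = 0 := by
    intro h h' hlt r hr
    simp only [hφ]
    have h1 : eN h r = 0 := by
      by_contra hne
      obtain ⟨h'', hlt'', hmem''⟩ := hch.2.2.2.1 h r hne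
      exact Finset.disjoint_left.mp
        (A.disj h'' h' (ne_of_lt (lt_trans hlt'' hlt))) hmem'' hr
    rw [h1, zero_add]
    apply Finset.sum_eq_zero
    intro i _
    rw [if_neg]
    intro hc
    exact Finset.disjoint_left.mp (A.disj h h' (ne_of_lt hlt)) (A.elt_mem h i) (hc ▸ hr)
  have hmemBl : ∀ (h : Fin A.m) (r : Fin n), r ∈ Bl h → r ∈ A.Jset h := by
    intro h r hr
    simp only [hBl, hBlI, hBlL, List.mem_append, List.mem_ofFn] at hr
    rcases hr with ⟨l, rfl⟩ | ⟨l, rfl⟩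
    · exact (Finset.mem_inter.mp ((I ∩ A.Jset h).orderIsoOfFin (hIc h) l).2).2
    · exact (Finset.mem_inter.mp ((L ∩ A.Jset h).orderIsoOfFin (hLc h) l).2).2
  have hfpol : ∀ h : Fin A.m, A.fpol cC eN h
      = ∑ j, MvPolynomial.C (φ h j) * MvPolynomial.X j := by
    intro h
    calc A.fpol cC eN h
        = (∑ i : Fin (A.lam h + 1), ∑ j : Fin n,
            if A.elt h i = j
            then MvPolynomial.C ((-1 : ℂ) ^ (i : ℕ) * A.DD cC h i) * MvPolynomial.X j
            else 0)
          + ∑ j, MvPolynomial.C (eN h j) * MvPolynomial.X j := by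
          rw [Elementary.fpol]
          congr 1
          apply Finset.sum_congr rfl
          intro i _
          rw [Finset.sum_ite_eq Finset.univ (A.elt h i)
            (fun j => MvPolynomial.C ((-1 : ℂ) ^ (i : ℕ) * A.DD cC h i) * MvPolynomial.X j),
            if_pos (Finset.mem_univ (A.elt h i))]
      _ = ∑ j : Fin n, ((∑ i : Fin (A.lam h + 1),
            if A.elt h i = j
            then MvPolynomial.C ((-1 : ℂ) ^ (i : ℕ) * A.DD cC h i) * MvPolynomial.X j
            else 0) + MvPolynomial.C (eN h j) * MvPolynomial.X j) := by
          rw [Finset.sum_add_distrib, Finset.sum_comm]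
      _ = ∑ j, MvPolynomial.C (φ h j) * MvPolynomial.X j := by
          apply Finset.sum_congr rfl
          intro j _
          simp only [hφ]
          rw [MvPolynomial.C_add, add_mul, add_comm]
          congr 1
          rw [map_sum, Finset.sum_mul]
          apply Finset.sum_congr rfl
          intro i _
          split_ifs with hif
          · rfl
          · rw [map_zero, zero_mul]
  have hlen : ∀ h : Fin A.m, (Bl h).length = 2 * A.lam h := by
    intro h
    simp only [hBl, hBlI, hBlL, List.length_append, List.length_ofFn]
    ring
  set c0 : Fin A.m → ℂ := fun h => (∏ j ∈ A.Jset h, a j) *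
      ((Nat.factorial (2 * A.lam h) : ℂ) * (∏ i, A.DD cC h i) ^ 2)⁻¹ with hc0
  have hPQ : A.prepot a cC eN = MvPolynomial.C (∏ h, c0 h)
      * ∏ h, (∑ j, MvPolynomial.C (φ h j) * MvPolynomial.X j) ^ (Bl h).length := by
    rw [Elementary.prepot, Finset.prod_mul_distrib]
    congr 1
    · rw [map_prod]
    · apply Finset.prod_congr rfl
      intro h _
      rw [hfpol h, hlen h]
  -- the permutation of the derivative list
  have hBI : List.ofFn (A.concatI I hIc) = (List.finRange A.m).flatMap BlI := by
    rw [Elementary.concatI, ofFn_concatTuple]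
  have hBL : List.ofFn (A.concatI L hLc) = (List.finRange A.m).flatMap BlL := by
    rw [Elementary.concatI, ofFn_concatTuple]
  have hperm : (List.ofFn (A.concatI I hIc) ++ List.ofFn (A.concatI L hLc)).Perm
      ((List.finRange A.m).reverse.flatMap Bl) := by
    rw [hBI, hBL]
    refine (List.flatMap_append_perm (List.finRange A.m) BlI BlL).trans ?_
    exact ((List.reverse_perm (List.finRange A.m)).flatMap_right Bl).symm
  have hderiv : pderivList
      (List.ofFn (A.concatI I hIc) ++ List.ofFn (A.concatI L hLc)) (A.prepot a cC eN)
      = MvPolynomial.C ((∏ h, c0 h)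
          * ∏ h, (((Bl h).length.factorial : ℕ) : ℂ) * ((Bl h).map (φ h)).prod) := by
    rw [hPQ, pderivList_C_mul, pderivList_perm hperm]
    rw [show (∏ h, (∑ j, MvPolynomial.C (φ h j) * MvPolynomial.X j) ^ (Bl h).length)
        = 1 * ∏ h, (∑ j, MvPolynomial.C (φ h j) * MvPolynomial.X j) ^ (Bl h).length
        from (one_mul _).symm]
    rw [pderivList_prod_linear_pow A.m φ Bl 1
      (fun h h' hlt r hr => hphi_out h h' hlt r (hmemBl h' r hr))
      (fun h r hr => MvPolynomial.pderiv_one)]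
    rw [mul_one, ← MvPolynomial.C_mul]
  -- the intersections are the erased sets
  have hIinter : ∀ h : Fin A.m, I ∩ A.Jset h = (A.Jset h).erase (A.elt h (u h)) := by
    intro h
    rw [Finset.erase_eq, ← hu h, Finset.sdiff_sdiff_self_left, Finset.inter_comm]
  have hLinter : ∀ h : Fin A.m, L ∩ A.Jset h = (A.Jset h).erase (A.elt h (s h)) := by
    intro h
    rw [Finset.erase_eq, ← hs h, Finset.sdiff_sdiff_self_left, Finset.inter_comm]
  -- the determinant factors
  have hvan : ∀ (M : Finset (Fin n)) (hMc : ∀ h, (M ∩ A.Jset h).card = A.lam h),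
      ∀ (x y : Fin A.m), y < x → ∀ (r' : Fin (A.lam y)) (r : Fin (A.lam x)),
      cC ((M ∩ A.Jset y).orderIsoOfFin (hMc y) r').1 (blockIdx A.lam A.lam_sum x r) = 0 := by
    intro M hMc x y hlt r' r
    apply A.coord_vanish hch (h' := y)
      (j := ((M ∩ A.Jset y).orderIsoOfFin (hMc y) r').1)
      (Finset.mem_inter.mp ((M ∩ A.Jset y).orderIsoOfFin (hMc y) r').2).2
    have hle : ∑ z ∈ Finset.univ.filter (fun z => z ≤ y), A.lam z
        ≤ ∑ z ∈ Finset.univ.filter (fun z => z < x), A.lam z := by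
      apply Finset.sum_le_sum_of_subset
      intro z hz
      simp only [Finset.mem_filter, Finset.mem_univ, true_and] at hz ⊢
      exact lt_of_le_of_lt hz hlt
    calc ∑ z ∈ Finset.univ.filter (fun z => z ≤ y), A.lam z
        ≤ ∑ z ∈ Finset.univ.filter (fun z => z < x), A.lam z := hle
      _ ≤ (blockIdx A.lam A.lam_sum x r : ℕ) := Nat.le_add_right _ _
  have hdet : ∀ (M : Finset (Fin n)) (hMc : ∀ h, (M ∩ A.Jset h).card = A.lam h)
      (t : (h : Fin A.m) → Fin (A.lam h + 1))
      (hMt : ∀ h, M ∩ A.Jset h = (A.Jset h).erase (A.elt h (t h))),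
      dtup b (A.concatI M hMc) = ∏ h, A.DD cC h (t h) := by
    intro M hMc t hMt
    rw [dtup]
    have hmat : (Matrix.of fun (r l : Fin k) => b (A.concatI M hMc l) r)
        = (Matrix.of fun (i l : Fin k) => sB l i)
          * (Matrix.of fun (i' l : Fin k) => cC (A.concatI M hMc l) i') := by
      ext r l
      rw [Matrix.mul_apply]
      simp only [Matrix.of_apply]
      have hrw := congrFun (hch.2.1 (A.concatI M hMc l)) r
      simp only [Finset.sum_apply, Pi.smul_apply, smul_eq_mul] at hrw
      rw [hrw]
      apply Finset.sum_congr rfl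
      intro i' _
      ring
    rw [hmat, Matrix.det_mul, hch.1, one_mul, Elementary.concatI,
      det_concatTuple A.lam A.lam_sum A.lam_pos
        (fun h l => ((M ∩ A.Jset h).orderIsoOfFin (hMc h) l).1) cC (hvan M hMc)]
    apply Finset.prod_congr rfl
    intro h _
    rw [Elementary.DD]
    congr 1
    ext r l
    simp only [Matrix.of_apply]
    congr 1
    exact orderIsoOfFin_congr (hMt h) (hMc h) (A.card_erase h (t h)) l
  have hdI : dtup b (A.concatI I hIc) = ∏ h, A.DD cC h (u h) := hdet I hIc u hIinter
  have hdL : dtup b (A.concatI L hLc) = ∏ h, A.DD cC h (s h) := hdet L hLc s hLinter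
  -- the products of the weights over the blocks
  have hmapPart : ∀ (M : Finset (Fin n)) (hMc : ∀ h, (M ∩ A.Jset h).card = A.lam h)
      (t : (h : Fin A.m) → Fin (A.lam h + 1))
      (hMt : ∀ h, M ∩ A.Jset h = (A.Jset h).erase (A.elt h (t h))) (h : Fin A.m),
      ((List.ofFn (fun l => ((M ∩ A.Jset h).orderIsoOfFin (hMc h) l).1)).map (φ h)).prod
        = ∏ i ∈ Finset.univ.erase (t h), ((-1 : ℂ) ^ (i : ℕ) * A.DD cC h i) := by
    intro M hMc t hMt h
    rw [List.map_ofFn, List.prod_ofFn]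
    calc ∏ l, (φ h ∘ fun l => ((M ∩ A.Jset h).orderIsoOfFin (hMc h) l).1) l
        = ∏ l, φ h
            (((A.Jset h).erase (A.elt h (t h))).orderIsoOfFin (A.card_erase h (t h)) l).1 := by
          apply Finset.prod_congr rfl
          intro l _
          exact congrArg (φ h) (orderIsoOfFin_congr (hMt h) (hMc h) (A.card_erase h (t h)) l)
      _ = ∏ j ∈ (A.Jset h).erase (A.elt h (t h)), φ h j :=
          prod_orderIsoOfFin _ _ (φ h)
      _ = ∏ i ∈ Finset.univ.erase (t h), φ h (A.elt h i) := A.prod_erase_elt h (t h) (φ h)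
      _ = ∏ i ∈ Finset.univ.erase (t h), ((-1 : ℂ) ^ (i : ℕ) * A.DD cC h i) :=
          Finset.prod_congr rfl (fun i _ => hphi_elt h i)
  have hmap : ∀ h : Fin A.m, ((Bl h).map (φ h)).prod
      = (∏ i ∈ Finset.univ.erase (u h), ((-1 : ℂ) ^ (i : ℕ) * A.DD cC h i))
        * (∏ i ∈ Finset.univ.erase (s h), ((-1 : ℂ) ^ (i : ℕ) * A.DD cC h i)) := by
    intro h
    simp only [hBl, hBlI, hBlL]
    rw [List.map_append, List.prod_append, hmapPart I hIc u hIinter h,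
      hmapPart L hLc s hLinter h]
  -- final assembly
  rw [hderiv, hdI, hdL, ← MvPolynomial.C_mul]
  congr 1
  have hfac : ∀ h : Fin A.m,
      (((Bl h).length.factorial : ℕ) : ℂ) * ((Bl h).map (φ h)).prod
        = ((2 * A.lam h).factorial : ℂ)
          * ((∏ i ∈ Finset.univ.erase (u h), ((-1 : ℂ) ^ (i : ℕ) * A.DD cC h i))
            * (∏ i ∈ Finset.univ.erase (s h), ((-1 : ℂ) ^ (i : ℕ) * A.DD cC h i))) := by
    intro h
    rw [hlen h, hmap h]
  rw [show (∏ h, (((Bl h).length.factorial : ℕ) : ℂ) * ((Bl h).map (φ h)).prod)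
      = ∏ h, ((2 * A.lam h).factorial : ℂ)
          * ((∏ i ∈ Finset.univ.erase (u h), ((-1 : ℂ) ^ (i : ℕ) * A.DD cC h i))
            * (∏ i ∈ Finset.univ.erase (s h), ((-1 : ℂ) ^ (i : ℕ) * A.DD cC h i)))
      from Finset.prod_congr rfl (fun h _ => hfac h)]
  have hRHS : ∏ j ∈ A.JLam, a j = ∏ h, ∏ j ∈ A.Jset h, a j := by
    rw [Elementary.JLam]
    exact Finset.prod_biUnion (fun x _ y _ hxy => A.disj x y hxy)
  rw [hRHS, ← Finset.prod_mul_distrib, ← Finset.prod_mul_distrib,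
    ← Finset.prod_mul_distrib, ← Finset.prod_mul_distrib]
  apply Finset.prod_congr rfl
  intro h _
  have hsb := scalar_block (A.DD cC h) (fun i => A.DD_ne_zero hch h i) (u h) (s h)
    (∏ j ∈ A.Jset h, a j) (2 * A.lam h)
  simp only [hc0]
  linear_combination hsb
end
end

section
/- For every independent (k−1)-element subset {s_1,…,s_{k−1}} ⊆ J, one has Σ_{j∈J} d_{j,s_1,…,s_{k−1}} · ∂P/∂z_j = 0 identically (as polynomials in z_1,…,z_n). Moreover, for every elementary subarrangement (J_1,…,J_m) and every h = 1,…,m, Σ_{j∈J} d_{j,s_1,…,s_{k−1}} · ∂f_{J_λ,h}/∂z_j = 0. -/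
open scoped BigOperators
open Classical

noncomputable section

namespace ArrPaper

variable {n k : ℕ} {b : Fin n → Fin k → ℂ}

/-- The operator `L p = ∑_j C(d_j) ∂p/∂z_j`. -/
def Lf (d : Fin n → ℂ) (p : MvPolynomial (Fin n) ℂ) : MvPolynomial (Fin n) ℂ :=
  ∑ j, MvPolynomial.C (d j) * MvPolynomial.pderiv j p

lemma Lf_sum {ι : Type*} (d : Fin n → ℂ) (s : Finset ι) (f : ι → MvPolynomial (Fin n) ℂ) :
    Lf d (∑ i ∈ s, f i) = ∑ i ∈ s, Lf d (f i) := by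
  unfold Lf
  simp only [map_sum, Finset.mul_sum]
  exact Finset.sum_comm

lemma Lf_C_mul (d : Fin n → ℂ) (c : ℂ) (p : MvPolynomial (Fin n) ℂ) :
    Lf d (MvPolynomial.C c * p) = MvPolynomial.C c * Lf d p := by
  unfold Lf
  simp only [MvPolynomial.pderiv_C_mul, Finset.mul_sum]
  exact Finset.sum_congr rfl fun j _ => by ring

lemma Lf_add (d : Fin n → ℂ) (p q : MvPolynomial (Fin n) ℂ) :
    Lf d (p + q) = Lf d p + Lf d q := by
  simp [Lf, mul_add, Finset.sum_add_distrib]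

lemma Lf_one (d : Fin n → ℂ) : Lf d (1 : MvPolynomial (Fin n) ℂ) = 0 := by
  simp [Lf]

lemma Lf_mul (d : Fin n → ℂ) (p q : MvPolynomial (Fin n) ℂ) :
    Lf d (p * q) = Lf d p * q + p * Lf d q := by
  unfold Lf
  simp only [MvPolynomial.pderiv_mul, mul_add, Finset.sum_add_distrib,
    Finset.sum_mul, Finset.mul_sum]
  congr 1
  · exact Finset.sum_congr rfl fun j _ => by ring
  · exact Finset.sum_congr rfl fun j _ => by ring

lemma Lf_pow (d : Fin n → ℂ) (p : MvPolynomial (Fin n) ℂ) (hp : Lf d p = 0) (e : ℕ) :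
    Lf d (p ^ e) = 0 := by
  induction e with
  | zero => simpa using Lf_one d
  | succ e ih => rw [pow_succ, Lf_mul, ih, hp, mul_zero, zero_mul, add_zero]

lemma Lf_prod (d : Fin n → ℂ) {ι : Type*} (s : Finset ι) (f : ι → MvPolynomial (Fin n) ℂ)
    (hf : ∀ i ∈ s, Lf d (f i) = 0) : Lf d (∏ i ∈ s, f i) = 0 := by
  induction s using Finset.cons_induction with
  | empty => simpa using Lf_one d
  | cons i s his ih =>
    rw [Finset.prod_cons, Lf_mul, hf i (Finset.mem_cons_self i s),
      ih fun j hj => hf j (Finset.mem_cons_of_mem hj), mul_zero, zero_mul, add_zero]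

lemma Lf_X (d : Fin n → ℂ) (t : Fin n) :
    Lf d (MvPolynomial.X t) = MvPolynomial.C (d t) := by
  unfold Lf
  rw [Finset.sum_eq_single t]
  · simp
  · intro j _ hj
    rw [MvPolynomial.pderiv_X_of_ne (Ne.symm hj), mul_zero]
  · simp

lemma Elementary.lam_le_k (A : Elementary n k b) (h : Fin A.m) : A.lam h ≤ k := by
  have h2 := A.lam_sum
  calc A.lam h ≤ ∑ h', A.lam h' :=
      Finset.single_le_sum (fun _ _ => Nat.zero_le _) (Finset.mem_univ h)
    _ = k := h2

lemma Elementary.m_le_k (A : Elementary n k b) : A.m ≤ k := by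
  calc A.m = ∑ _h : Fin A.m, 1 := by simp
    _ ≤ ∑ h, A.lam h := Finset.sum_le_sum fun h _ => A.lam_pos h
    _ = k := A.lam_sum

instance instFiniteElementary : Finite (Elementary n k b) := by
  let F : Elementary n k b → (Fin (k + 1) → Option (Fin (k + 1) × Finset (Fin n))) :=
    fun A h => if hh : (h : ℕ) < A.m then
      some (⟨A.lam ⟨h, hh⟩, Nat.lt_succ_of_le (A.lam_le_k _)⟩, A.Jset ⟨h, hh⟩) else none
  apply Finite.of_injective F
  intro A B hAB
  have hm : A.m = B.m := by
    by_contra hne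
    rcases Nat.lt_or_ge A.m B.m with hlt | hge
    · have hA : A.m < k + 1 := Nat.lt_succ_of_le A.m_le_k
      have := congrFun hAB ⟨A.m, hA⟩
      simp only [F, dif_neg (lt_irrefl A.m), dif_pos hlt] at this
      cases this
    · have hlt : B.m < A.m := lt_of_le_of_ne hge (Ne.symm hne)
      have hB : B.m < k + 1 := Nat.lt_succ_of_le B.m_le_k
      have := congrFun hAB ⟨B.m, hB⟩
      simp only [F, dif_neg (lt_irrefl B.m), dif_pos hlt] at this
      cases this
  have hlam : ∀ hh : Fin A.m, A.lam hh = B.lam (Fin.cast hm hh) := by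
    intro hh
    have hb : (hh : ℕ) < k + 1 := Nat.lt_succ_of_le (le_trans (Nat.le_of_lt hh.isLt) A.m_le_k)
    have := congrFun hAB ⟨hh, hb⟩
    simp only [F, dif_pos (show ((⟨(hh:ℕ), hb⟩ : Fin (k+1)) : ℕ) < A.m from hh.isLt),
      dif_pos (show ((⟨(hh:ℕ), hb⟩ : Fin (k+1)) : ℕ) < B.m from hm ▸ hh.isLt),
      Option.some.injEq, Prod.mk.injEq, Fin.mk.injEq] at this
    exact this.1
  have hJ : ∀ hh : Fin A.m, A.Jset hh = B.Jset (Fin.cast hm hh) := by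
    intro hh
    have hb : (hh : ℕ) < k + 1 := Nat.lt_succ_of_le (le_trans (Nat.le_of_lt hh.isLt) A.m_le_k)
    have := congrFun hAB ⟨hh, hb⟩
    simp only [F, dif_pos (show ((⟨(hh:ℕ), hb⟩ : Fin (k+1)) : ℕ) < A.m from hh.isLt),
      dif_pos (show ((⟨(hh:ℕ), hb⟩ : Fin (k+1)) : ℕ) < B.m from hm ▸ hh.isLt),
      Option.some.injEq, Prod.mk.injEq, Fin.mk.injEq] at this
    exact this.2
  obtain ⟨mA, lamA, JA, _, _, _, _, _, _⟩ := A
  obtain ⟨mB, lamB, JB, _, _, _, _, _, _⟩ := B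
  simp only at hm hlam hJ
  subst hm
  have h1 : lamA = lamB := funext fun hh => by simpa using hlam hh
  have h2 : JA = JB := funext fun hh => by simpa using hJ hh
  subst h1; subst h2
  rfl

lemma dtup_cons_linear (hk : 0 < k) (hkn : k < n) (b : Fin n → Fin k → ℂ)
    (I' : Finset (Fin n)) (hI' : I'.card = k - 1) :
    ∃ g : (Fin k → ℂ) →ₗ[ℂ] ℂ, ∀ j, g (b j) = dtup b (consTuple hk j I' hI') := by
  have hn : 0 < n := lt_trans hk hkn
  set j0 : Fin n := ⟨0, hn⟩ with hj0
  set w : Fin k → Fin k → ℂ := fun l => b (consTuple hk j0 I' hI' l) with hw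
  refine ⟨((Matrix.detRowAlternating :
      (Fin k → ℂ) [⋀^Fin k]→ₗ[ℂ] ℂ)).toMultilinearMap.toLinearMap w ⟨0, hk⟩, ?_⟩
  intro j
  have hupd : Function.update w ⟨0, hk⟩ (b j) = fun l => b (consTuple hk j I' hI' l) := by
    funext l
    by_cases hl : l = ⟨0, hk⟩
    · subst hl
      simp [Function.update, consTuple]
    · have hl' : (l : ℕ) ≠ 0 := fun h => hl (Fin.ext h)
      rw [Function.update_of_ne hl]
      simp only [hw, consTuple, dif_neg hl']
  rw [MultilinearMap.toLinearMap_apply, hupd]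
  show Matrix.det (Matrix.of fun l r => b (consTuple hk j I' hI' l) r) = _
  rw [dtup, ← Matrix.det_transpose]
  congr 1

lemma Lf_fpol (d : Fin n → ℂ) (g : (Fin k → ℂ) →ₗ[ℂ] ℂ) (hg : ∀ j, g (b j) = d j)
    (A : Elementary n k b) (cC : Fin n → Fin k → ℂ) (eN : Fin A.m → Fin n → ℂ)
    (h : Fin A.m)
    (hrel : (∑ i : Fin (A.lam h + 1), ((-1 : ℂ) ^ (i : ℕ) * A.DD cC h i) • b (A.elt h i))
        + ∑ j : Fin n, eN h j • b j = 0) :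
    Lf d (A.fpol cC eN h) = 0 := by
  have key : (∑ i : Fin (A.lam h + 1), ((-1 : ℂ) ^ (i : ℕ) * A.DD cC h i) * d (A.elt h i))
      + ∑ j : Fin n, eN h j * d j = 0 := by
    have := congrArg g hrel
    simpa only [map_add, map_sum, map_smul, smul_eq_mul, map_zero, hg] using this
  unfold Elementary.fpol
  rw [Lf_add, Lf_sum, Lf_sum]
  simp only [Lf_C_mul, Lf_X, ← MvPolynomial.C_mul, ← map_sum, ← map_add, key, map_zero]

end ArrPaper

open ArrPaper

/-- **Lemma 4.5 of the paper (invariance of the potential).**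
For every independent `(k−1)`-element subset `{s_1,…,s_{k−1}} ⊆ J`,
`∑_{j∈J} d_{j,s_1,…,s_{k−1}} ∂P/∂z_j = 0` for the potential of first kind `P`, and
`∑_{j∈J} d_{j,s_1,…,s_{k−1}} ∂f_{J_λ,h}/∂z_j = 0` for every elementary
subarrangement and every `h`. -/
theorem stmt15 (n k : ℕ) (hk : 0 < k) (hkn : k < n)
    (b : Fin n → Fin k → ℂ) (hb0 : ∀ j, b j ≠ 0)
    (hbspan : Submodule.span ℂ (Set.range b) = ⊤)
    (a : Fin n → ℂ) (ha : ∀ j, a j ≠ 0)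
    (h2 : H2 b a)
    -- the choices fixed once for each elementary subarrangement
    (sB : Elementary n k b → Fin k → Fin k → ℂ)
    (cC : Elementary n k b → Fin n → Fin k → ℂ)
    (eN : (A : Elementary n k b) → Fin A.m → Fin n → ℂ)
    (hch : ∀ A : Elementary n k b, A.ChoiceOK (sB A) (cC A) (eN A))
    (I' : Finset (Fin n)) (hI' : I'.card = k - 1) (hind : Indep b I') :
    (∑ j : Fin n, MvPolynomial.C (dtup b (consTuple hk j I' hI')) *
        MvPolynomial.pderiv j (Potential1 b a cC eN) = 0) ∧
    (∀ (A : Elementary n k b) (h : Fin A.m),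
      ∑ j : Fin n, MvPolynomial.C (dtup b (consTuple hk j I' hI')) *
        MvPolynomial.pderiv j (A.fpol (cC A) (eN A) h) = 0) := by
  obtain ⟨g, hg⟩ := dtup_cons_linear hk hkn b I' hI'
  set d : Fin n → ℂ := fun j => dtup b (consTuple hk j I' hI') with hd
  have hfpol : ∀ (A : Elementary n k b) (h : Fin A.m),
      Lf d (A.fpol (cC A) (eN A) h) = 0 := fun A h =>
    Lf_fpol d g hg A (cC A) (eN A) h ((hch A).2.2.2.2 h)
  constructor
  · have : Fintype (Elementary n k b) := Fintype.ofFinite _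
    show Lf d (Potential1 b a cC eN) = 0
    rw [Potential1, finsum_eq_sum_of_fintype, Lf_sum]
    apply Finset.sum_eq_zero
    intro A _
    rw [Lf_C_mul, Elementary.prepot, Lf_prod, mul_zero]
    intro h _
    rw [Lf_C_mul, Lf_pow d _ (hfpol A h), mul_zero]
  · intro A h
    exact hfpol A h
end
end
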